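/- arXiv:2406.08175 — 2 statements merged into one kernel-verified Lean document; each statement's English description precedes it below -/
import Mathlib

section
/- Let M be an MDP in reachability form with matrices A and T as above, δ_in the Dirac initial distribution, and λ ∈ ℝ^k. Then every scheduler σ satisfies the disjunction ⋁_{i=1}^k Pr^σ(◇G_i) < λ_i if and only if there exist x ∈ ℝ^S and z ∈ ℝ^k with z ≥ 0, A x ≥ T z, and x(s_in) < λᵀ z. -/
open Finset

structure MDP (S A : Type) [Fintype S] [Fintype A] where
  init : S
  trans : S → A → Option (S → ℝ)
  nonneg' : ∀ s a f, trans s a = some f → ∀ t, 0 ≤ f t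
  sum_one' : ∀ s a f, trans s a = some f → ∑ t, f t = 1
  exists_enabled : ∀ s, ∃ a, (trans s a).isSome

namespace MDP

variable {S A : Type} [Fintype S] [Fintype A]

/-- action `a` is enabled in state `s`. -/
def enabled (M : MDP S A) (s : S) (a : A) : Prop := (M.trans s a).isSome

/-- transition probability (0 if the action is not enabled). -/
noncomputable def prob (M : MDP S A) (s : S) (a : A) (t : S) : ℝ :=
  ((M.trans s a).getD 0) t

/-- A (history-dependent, randomized) scheduler. -/
structure Scheduler (M : MDP S A) where
  choice : List (S × A) → S → A → ℝ
  choice_nonneg : ∀ h s a, 0 ≤ choice h s a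
  choice_sum_one : ∀ h s, ∑ a, choice h s a = 1
  choice_support : ∀ h s a, choice h s a ≠ 0 → M.enabled s a

variable [DecidableEq S]

/-- probability of reaching `G` within `n` steps, from history `h` and current state `s`. -/
noncomputable def reachAux (M : MDP S A) (σ : Scheduler M) (G : Finset S) :
    ℕ → List (S × A) → S → ℝ
  | 0, _, s => if s ∈ G then 1 else 0
  | n + 1, h, s =>
      if s ∈ G then 1
      else ∑ a : A, σ.choice h s a * ∑ t : S, M.prob s a t * reachAux M σ G n (h ++ [(s, a)]) t

/-- probability of eventually reaching `G`, starting in `s`. -/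
noncomputable def prReachFrom (M : MDP S A) (σ : Scheduler M) (G : Finset S) (s : S) : ℝ :=
  ⨆ n : ℕ, reachAux M σ G n [] s

/-- probability of eventually reaching `G` from the initial state. -/
noncomputable def prReach (M : MDP S A) (σ : Scheduler M) (G : Finset S) : ℝ :=
  prReachFrom M σ G M.init

/-- probability of staying in `G` for the first `n` steps. -/
noncomputable def invAux (M : MDP S A) (σ : Scheduler M) (G : Finset S) :
    ℕ → List (S × A) → S → ℝ
  | 0, _, s => if s ∈ G then 1 else 0
  | n + 1, h, s =>
      if s ∈ G then
        ∑ a : A, σ.choice h s a * ∑ t : S, M.prob s a t * invAux M σ G n (h ++ [(s, a)]) t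
      else 0

/-- probability of always remaining in `G`, from the initial state. -/
noncomputable def prInv (M : MDP S A) (σ : Scheduler M) (G : Finset S) : ℝ :=
  ⨅ n : ℕ, invAux M σ G n [] M.init

/-- expected total reward collected in the first `n` steps. -/
noncomputable def expTotal (M : MDP S A) (σ : Scheduler M) (r : S → A → ℝ) :
    ℕ → List (S × A) → S → ℝ
  | 0, _, _ => 0
  | n + 1, h, s =>
      ∑ a : A, σ.choice h s a *
        (r s a + ∑ t : S, M.prob s a t * expTotal M σ r n (h ++ [(s, a)]) t)

/-- expected (liminf) mean payoff under scheduler `σ`. -/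
noncomputable def expMPinf (M : MDP S A) (σ : Scheduler M) (r : S → A → ℝ) : ℝ :=
  Filter.liminf (fun n : ℕ => expTotal M σ r n [] M.init / n) Filter.atTop

/-- expected (limsup) mean payoff under scheduler `σ`. -/
noncomputable def expMPsup (M : MDP S A) (σ : Scheduler M) (r : S → A → ℝ) : ℝ :=
  Filter.limsup (fun n : ℕ => expTotal M σ r n [] M.init / n) Filter.atTop

/-- `M'` (with fresh sink `⊥ = none`) is a subsystem of `M` with state set `S' ∪ {⊥}`. -/
def IsSubsystem (M : MDP S A) (S' : Finset S) (M' : MDP (Option S) A) : Prop :=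
  M.init ∈ S' ∧ M'.init = some M.init ∧
  (∀ a, M'.enabled none a → ∀ t, M'.prob none a t = if t = none then 1 else 0) ∧
  (∀ s ∈ S', ∀ a, (M'.enabled (some s) a ↔ M.enabled s a)) ∧
  (∀ s ∈ S', ∀ t ∈ S', ∀ a,
    M'.prob (some s) a (some t) = M.prob s a t ∨ M'.prob (some s) a (some t) = 0) ∧
  (∀ s ∈ S', ∀ t, t ∉ S' → ∀ a, M'.prob (some s) a (some t) = 0)

/-- `M'` is the subsystem of `M` induced by `S'`: transitions leaving `S'` are
redirected to the absorbing sink `⊥ = none`. -/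
def IsInducedSubsystem (M : MDP S A) (S' : Finset S) (M' : MDP (Option S) A) : Prop :=
  M.init ∈ S' ∧ M'.init = some M.init ∧
  (∀ a, M'.enabled none a → ∀ t, M'.prob none a t = if t = none then 1 else 0) ∧
  (∀ s ∈ S', ∀ a, (M'.enabled (some s) a ↔ M.enabled s a)) ∧
  (∀ s ∈ S', ∀ t ∈ S', ∀ a, M'.prob (some s) a (some t) = M.prob s a t) ∧
  (∀ s ∈ S', ∀ t, t ∉ S' → ∀ a, M'.prob (some s) a (some t) = 0) ∧
  (∀ s ∈ S', ∀ a, M.enabled s a → M'.prob (some s) a none = ∑ t ∈ S'ᶜ, M.prob s a t)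

/-- `C` is an end component of `M`. -/
def IsEC (M : MDP S A) (C : Finset (S × A)) : Prop :=
  C.Nonempty ∧ (∀ p ∈ C, M.enabled p.1 p.2) ∧
  (∀ p ∈ C, ∀ t, 0 < M.prob p.1 p.2 t → t ∈ C.image Prod.fst) ∧
  (∀ s ∈ C.image Prod.fst, ∀ t ∈ C.image Prod.fst,
    Relation.ReflTransGen (fun u v => ∃ a, (u, a) ∈ C ∧ 0 < M.prob u a v) s t)

end MDP

/-- positive boolean combinations of lower-bounded reachability and invariance
predicates; the flag `strict` distinguishes `>` from `≥`. -/
inductive MOProp (S : Type) where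
  | reach (G : Finset S) (lam : ℝ) (strict : Bool)
  | invar (G : Finset S) (lam : ℝ) (strict : Bool)
  | conj (p q : MOProp S)
  | disj (p q : MOProp S)

namespace MDP

variable {S A : Type} [Fintype S] [Fintype A] [DecidableEq S]

/-- satisfaction of a multi-objective property in `M` under `σ`. -/
def Sat (M : MDP S A) (σ : Scheduler M) : MOProp S → Prop
  | .reach G lam strict => if strict then lam < prReach M σ G else lam ≤ prReach M σ G
  | .invar G lam strict => if strict then lam < prInv M σ G else lam ≤ prInv M σ G
  | .conj p q => Sat M σ p ∧ Sat M σ q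
  | .disj p q => Sat M σ p ∨ Sat M σ q

/-- satisfaction of a multi-objective property (over the original state space) in a
subsystem `M'` with sink `⊥ = none`. -/
def SatSub (M' : MDP (Option S) A) (σ : Scheduler M') : MOProp S → Prop
  | .reach G lam strict =>
      if strict then lam < prReach M' σ (G.image some) else lam ≤ prReach M' σ (G.image some)
  | .invar G lam strict =>
      if strict then lam < prInv M' σ (G.image some) else lam ≤ prInv M' σ (G.image some)
  | .conj p q => SatSub M' σ p ∧ SatSub M' σ q
  | .disj p q => SatSub M' σ p ∨ SatSub M' σ q

end MDP
namespace MDPFarkas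
set_option linter.unusedSectionVars false

open MDP Finset

variable {S A : Type} [Fintype S] [Fintype A] [DecidableEq S] {M : MDP S A}

lemma prob_nonneg (M : MDP S A) (s : S) (a : A) (t : S) : 0 ≤ M.prob s a t := by
  unfold MDP.prob
  cases h : M.trans s a with
  | none => simp
  | some f => simpa using M.nonneg' s a f h t

lemma prob_sum_one {s : S} {a : A} (h : M.enabled s a) : ∑ t, M.prob s a t = 1 := by
  obtain ⟨f, hf⟩ := Option.isSome_iff_exists.mp h
  have : ∀ t, M.prob s a t = f t := fun t => by simp [MDP.prob, hf]
  simp only [this]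
  exact M.sum_one' s a f hf

lemma prob_disabled {s : S} {a : A} (h : ¬ M.enabled s a) (t : S) : M.prob s a t = 0 := by
  have : M.trans s a = none := Option.not_isSome_iff_eq_none.mp h
  simp [MDP.prob, this]

lemma sum_prob_le_one (s : S) (a : A) (E : Finset S) : ∑ t ∈ E, M.prob s a t ≤ 1 := by
  by_cases h : M.enabled s a
  · calc ∑ t ∈ E, M.prob s a t ≤ ∑ t, M.prob s a t :=
        Finset.sum_le_sum_of_subset_of_nonneg (Finset.subset_univ E)
          (fun t _ _ => prob_nonneg M s a t)
    _ = 1 := prob_sum_one h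
  · simp [prob_disabled h]

lemma prob_absorb_ne {F : Finset S}
    (habs : ∀ s ∈ F, ∀ a, M.enabled s a → M.prob s a s = 1)
    {s : S} (hs : s ∈ F) {a : A} (ha : M.enabled s a) {t : S} (ht : t ≠ s) :
    M.prob s a t = 0 := by
  have h1 : ∑ u ∈ Finset.univ.erase s, M.prob s a u = 0 := by
    have := prob_sum_one ha
    have h2 : ∑ u ∈ Finset.univ.erase s, M.prob s a u + M.prob s a s = 1 := by
      rw [Finset.sum_erase_add _ _ (Finset.mem_univ s)]; exact this
    rw [habs s hs a ha] at h2; linarith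
  have := (Finset.sum_eq_zero_iff_of_nonneg
    (fun u _ => prob_nonneg M s a u)).mp h1
  exact this t (Finset.mem_erase.mpr ⟨ht, Finset.mem_univ t⟩)

/-- mixing over scheduler choices, upper bound version -/
lemma sum_choice_mul_le (σ : Scheduler M) (h : List (S × A)) (s : S) (φ : A → ℝ) {x : ℝ}
    (hb : ∀ a, M.enabled s a → φ a ≤ x) :
    ∑ a, σ.choice h s a * φ a ≤ x := by
  have : ∀ a ∈ Finset.univ, σ.choice h s a * φ a ≤ σ.choice h s a * x := by
    intro a _
    rcases eq_or_ne (σ.choice h s a) 0 with h0 | h0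
    · simp [h0]
    · exact mul_le_mul_of_nonneg_left (hb a (σ.choice_support h s a h0))
        (σ.choice_nonneg h s a)
  calc ∑ a, σ.choice h s a * φ a ≤ ∑ a, σ.choice h s a * x := Finset.sum_le_sum this
    _ = x := by rw [← Finset.sum_mul, σ.choice_sum_one h s, one_mul]

lemma le_sum_choice_mul (σ : Scheduler M) (h : List (S × A)) (s : S) (φ : A → ℝ) {x : ℝ}
    (hb : ∀ a, M.enabled s a → x ≤ φ a) :
    x ≤ ∑ a, σ.choice h s a * φ a := by
  have := sum_choice_mul_le σ h s (fun a => -φ a) (x := -x) (fun a ha => by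
    simpa using hb a ha)
  simp only [mul_neg, Finset.sum_neg_distrib] at this
  linarith

lemma reachAux_nonneg (σ : Scheduler M) (G : Finset S) :
    ∀ (n : ℕ) (h : List (S × A)) (s : S), 0 ≤ reachAux M σ G n h s := by
  intro n
  induction n with
  | zero => intro h s; simp only [reachAux]; positivity
  | succ n ih =>
    intro h s
    simp only [reachAux]
    split
    · norm_num
    · apply Finset.sum_nonneg
      intro a _
      apply mul_nonneg (σ.choice_nonneg h s a)
      exact Finset.sum_nonneg fun t _ => mul_nonneg (prob_nonneg M s a t) (ih _ t)

lemma reachAux_le_one (σ : Scheduler M) (G : Finset S) :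
    ∀ (n : ℕ) (h : List (S × A)) (s : S), reachAux M σ G n h s ≤ 1 := by
  intro n
  induction n with
  | zero => intro h s; simp only [reachAux]; split <;> norm_num
  | succ n ih =>
    intro h s
    simp only [reachAux]
    split
    · norm_num
    · apply sum_choice_mul_le
      intro a ha
      calc ∑ t, M.prob s a t * reachAux M σ G n (h ++ [(s, a)]) t
          ≤ ∑ t, M.prob s a t * 1 := Finset.sum_le_sum fun t _ =>
            mul_le_mul_of_nonneg_left (ih _ t) (prob_nonneg M s a t)
        _ = 1 := by simp [prob_sum_one ha]

lemma reachAux_of_mem (σ : Scheduler M) {G : Finset S} {s : S} (hs : s ∈ G)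
    (n : ℕ) (h : List (S × A)) : reachAux M σ G n h s = 1 := by
  cases n <;> simp [reachAux, hs]

lemma reachAux_mono (σ : Scheduler M) (G : Finset S) :
    ∀ (n : ℕ) (h : List (S × A)) (s : S),
      reachAux M σ G n h s ≤ reachAux M σ G (n + 1) h s := by
  intro n
  induction n with
  | zero =>
    intro h s
    simp only [reachAux]
    split
    · norm_num
    · exact reachAux_nonneg σ G 1 h s |>.trans (by simp [reachAux, *])
  | succ n ih =>
    intro h s
    simp only [reachAux]
    split
    · norm_num
    · apply Finset.sum_le_sum
      intro a _
      apply mul_le_mul_of_nonneg_left _ (σ.choice_nonneg h s a)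
      apply Finset.sum_le_sum
      intro t _
      exact mul_le_mul_of_nonneg_left (ih _ t) (prob_nonneg M s a t)

lemma reachAux_mono' (σ : Scheduler M) (G : Finset S) {n m : ℕ} (hnm : n ≤ m)
    (h : List (S × A)) (s : S) : reachAux M σ G n h s ≤ reachAux M σ G m h s := by
  induction m with
  | zero => simp_all
  | succ m ih =>
    rcases Nat.lt_or_ge n (m+1) with h1 | h1
    · exact (ih (Nat.lt_succ_iff.mp h1)).trans (reachAux_mono σ G m h s)
    · have : n = m + 1 := le_antisymm hnm h1
      subst this; rfl

lemma reachAux_absorbing {F : Finset S}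
    (habs : ∀ s ∈ F, ∀ a, M.enabled s a → M.prob s a s = 1)
    (σ : Scheduler M) {G : Finset S} (hGF : G ⊆ F) :
    ∀ (n : ℕ) (h : List (S × A)) (s : S), s ∈ F →
      reachAux M σ G n h s = if s ∈ G then 1 else 0 := by
  intro n
  induction n with
  | zero => intro h s _; rfl
  | succ n ih =>
    intro h s hsF
    simp only [reachAux]
    split
    · rfl
    · rename_i hsG
      apply Finset.sum_eq_zero
      intro a _
      rcases eq_or_ne (σ.choice h s a) 0 with h0 | h0
      · simp [h0]
      · have ha := σ.choice_support h s a h0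
        have : ∑ t, M.prob s a t * reachAux M σ G n (h ++ [(s, a)]) t = 0 := by
          rw [Finset.sum_eq_single_of_mem s (Finset.mem_univ s)]
          · rw [ih _ s hsF, if_neg hsG, mul_zero]
          · intro t _ ht
            rw [prob_absorb_ne habs hsF ha ht, zero_mul]
        rw [this, mul_zero]

lemma prReachFrom_bddAbove (σ : Scheduler M) (G : Finset S) (s : S) :
    BddAbove (Set.range fun n => reachAux M σ G n [] s) := by
  refine ⟨1, ?_⟩
  rintro x ⟨n, rfl⟩
  exact reachAux_le_one σ G n [] s

end MDPFarkas
namespace MDPFarkas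

section Farkas

variable {n : Type} [Fintype n]

private lemma dot_sub_smul (v w u : n → ℝ) (a : ℝ) :
    ∑ j, (v j - a * w j) * u j = (∑ j, v j * u j) - a * ∑ j, w j * u j := by
  rw [Finset.mul_sum, ← Finset.sum_sub_distrib]
  congr 1; ext j; ring

lemma farkas_fin : ∀ (m : ℕ) (g : Fin m → n → ℝ) (b : n → ℝ),
    (∃ c : Fin m → ℝ, (∀ i, 0 ≤ c i) ∧ ∀ j, ∑ i, c i * g i j = b j) ∨
    (∃ u : n → ℝ, (∀ i, 0 ≤ ∑ j, g i j * u j) ∧ ∑ j, b j * u j < 0) := by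
  intro m
  induction m with
  | zero =>
    intro g b
    by_cases hb : b = 0
    · exact Or.inl ⟨0, fun i => le_refl _, fun j => by simp [hb]⟩
    · refine Or.inr ⟨fun j => -b j, fun i => i.elim0, ?_⟩
      have hex : ∃ j, b j ≠ 0 := by
        by_contra hc; push_neg at hc; exact hb (funext hc)
      obtain ⟨j0, hj0⟩ := hex
      have hpos : 0 < ∑ j, b j * b j := by
        apply Finset.sum_pos' (fun j _ => mul_self_nonneg _)
        exact ⟨j0, Finset.mem_univ j0, mul_self_pos.mpr hj0⟩
      have heq : ∑ j, b j * -b j = -∑ j, b j * b j := by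
        rw [← Finset.sum_neg_distrib]; congr 1; ext j; ring
      rw [heq]; linarith
  | succ m ih =>
    intro g b
    set g' : Fin m → n → ℝ := fun i => g i.castSucc with hg'
    set gm : n → ℝ := g (Fin.last m) with hgm
    rcases ih g' b with ⟨c, hc, hsum⟩ | ⟨u, hu, hbu⟩
    · -- b is in the cone of the first m generators
      refine Or.inl ⟨Fin.snoc c 0, ?_, ?_⟩
      · intro i
        refine Fin.lastCases ?_ ?_ i
        · simp
        · intro i; simpa using hc i
      · intro j
        rw [Fin.sum_univ_castSucc]
        simp only [Fin.snoc_castSucc, Fin.snoc_last, zero_mul, add_zero]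
        exact hsum j
    · by_cases hgmu : 0 ≤ ∑ j, gm j * u j
      · refine Or.inr ⟨u, ?_, hbu⟩
        intro i
        refine Fin.lastCases ?_ ?_ i
        · exact hgmu
        · intro i; exact hu i
      · push_neg at hgmu
        have hgmu' : (∑ j, gm j * u j) ≠ 0 := ne_of_lt hgmu
        -- project everything along gm
        set α : (n → ℝ) → ℝ := fun v => (∑ j, v j * u j) / (∑ j, gm j * u j) with hα
        set proj : (n → ℝ) → (n → ℝ) := fun v => fun j => v j - α v * gm j with hproj
        rcases ih (fun i => proj (g' i)) (proj b) with ⟨c, hc, hsum⟩ | ⟨u', hu', hbu'⟩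
        · -- b = Σ c i g' i + β gm with β ≥ 0
          set β : ℝ := α b - ∑ i, c i * α (g' i) with hβ
          have hαb : α b * (∑ j, gm j * u j) = ∑ j, b j * u j := by
            simp only [hα]; exact div_mul_cancel₀ _ hgmu'
          have hcα : ∀ i, α (g' i) * (∑ j, gm j * u j) = ∑ j, g' i j * u j := fun i => by
            simp only [hα]; exact div_mul_cancel₀ _ hgmu'
          have hmul : β * (∑ j, gm j * u j)
              = (∑ j, b j * u j) - ∑ i, c i * ∑ j, g' i j * u j := by
            rw [hβ, sub_mul, hαb, Finset.sum_mul]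
            congr 1
            exact Finset.sum_congr rfl fun i _ => by rw [mul_assoc, hcα i]
          have hS : 0 ≤ ∑ i, c i * ∑ j, g' i j * u j :=
            Finset.sum_nonneg fun i _ => mul_nonneg (hc i) (hu i)
          have hβ0 : 0 ≤ β := by
            by_contra hcon
            push_neg at hcon
            nlinarith
          refine Or.inl ⟨Fin.snoc c β, ?_, ?_⟩
          · intro i
            refine Fin.lastCases ?_ ?_ i
            · simpa using hβ0
            · intro i; simpa using hc i
          · intro j
            rw [Fin.sum_univ_castSucc]
            simp only [Fin.snoc_castSucc, Fin.snoc_last]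
            have h2 : (∑ i, c i * g' i j) - (∑ i, c i * α (g' i)) * gm j
                = b j - α b * gm j := by
              have h3 := hsum j
              simp only [hproj] at h3
              calc (∑ i, c i * g' i j) - (∑ i, c i * α (g' i)) * gm j
                  = ∑ i, c i * (g' i j - α (g' i) * gm j) := by
                    rw [Finset.sum_mul, ← Finset.sum_sub_distrib]
                    congr 1; ext i; ring
                _ = b j - α b * gm j := h3
            have hβ' : β = α b - ∑ i, c i * α (g' i) := hβ
            linear_combination h2 + gm j * hβ'
        · -- build the new separating hyperplane
          set κ : ℝ := (∑ j, gm j * u' j) / (∑ j, gm j * u j) with hκ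
          set u'' : n → ℝ := fun j => u' j - κ * u j with hu''
          have key : ∀ v : n → ℝ, ∑ j, v j * u'' j = ∑ j, (proj v) j * u' j := by
            intro v
            have l1 : ∑ j, v j * u'' j = (∑ j, v j * u' j) - κ * ∑ j, v j * u j := by
              simp only [hu'']
              rw [Finset.mul_sum, ← Finset.sum_sub_distrib]
              congr 1; ext j; ring
            have l2 : ∑ j, (proj v) j * u' j
                = (∑ j, v j * u' j) - α v * ∑ j, gm j * u' j := by
              simp only [hproj]
              exact dot_sub_smul v gm u' (α v)
            rw [l1, l2, hκ, hα]
            field_simp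
          refine Or.inr ⟨u'', ?_, ?_⟩
          · intro i
            refine Fin.lastCases ?_ ?_ i
            · rw [show (∑ j, g (Fin.last m) j * u'' j) = ∑ j, gm j * u'' j from rfl, key gm]
              have hαgm : α gm = 1 := div_self hgmu'
              have : ∀ j, (proj gm) j = 0 := by
                intro j; simp only [hproj, hαgm]; ring
              simp [this]
            · intro i
              rw [show (∑ j, g i.castSucc j * u'' j) = ∑ j, g' i j * u'' j from rfl, key (g' i)]
              exact hu' i
          · rw [key b]; exact hbu'

/-- Farkas' lemma over an arbitrary finite index type of generators. -/
lemma farkas {ι : Type} [Fintype ι] (g : ι → n → ℝ) (b : n → ℝ) :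
    (∃ c : ι → ℝ, (∀ i, 0 ≤ c i) ∧ ∀ j, ∑ i, c i * g i j = b j) ∨
    (∃ u : n → ℝ, (∀ i, 0 ≤ ∑ j, g i j * u j) ∧ ∑ j, b j * u j < 0) := by
  classical
  obtain ⟨e⟩ := Fintype.truncEquivFin ι
  rcases farkas_fin (Fintype.card ι) (fun i => g (e.symm i)) b with ⟨c, hc, hsum⟩ | ⟨u, hu, hbu⟩
  · refine Or.inl ⟨fun i => c (e i), fun i => hc (e i), fun j => ?_⟩
    rw [← hsum j]
    exact Fintype.sum_equiv e _ _ (fun i => by simp)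
  · exact Or.inr ⟨u, fun i => by simpa using hu (e i), hbu⟩

end Farkas

end MDPFarkas
namespace MDPFarkas

open MDP Finset

set_option linter.unusedSectionVars false

section Algebra

variable {ι κ : Type}

lemma weight_one_sub [Fintype ι] (w : ι → ℝ) (hw : ∑ a, w a = 1) (c : ℝ) (φ : ι → ℝ) :
    c * (1 - ∑ a, w a * φ a) = ∑ a, w a * (c * (1 - φ a)) := by
  have h1 : ∀ a ∈ Finset.univ, w a * (c * (1 - φ a)) = c * w a - c * (w a * φ a) :=
    fun a _ => by ring
  rw [Finset.sum_congr rfl h1, Finset.sum_sub_distrib, ← Finset.mul_sum, ← Finset.mul_sum,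
    hw, mul_one]
  ring

lemma split_one_sub (E : Finset ι) (p r : ι → ℝ) (c SF : ℝ)
    (hsum : SF + ∑ u ∈ E, p u = 1) :
    c * (1 - (SF + ∑ u ∈ E, p u * r u)) = ∑ u ∈ E, p u * (c * (1 - r u)) := by
  have h1 : ∀ u ∈ E, p u * (c * (1 - r u)) = c * p u - c * (p u * r u) := fun u _ => by ring
  rw [Finset.sum_congr rfl h1, Finset.sum_sub_distrib, ← Finset.mul_sum, ← Finset.mul_sum]
  have h2 : ∑ u ∈ E, p u = 1 - SF := by linarith
  rw [h2]; ring

lemma swap_zw (s : Finset ι) (t : Finset κ) (z : ι → ℝ) (w : κ → ℝ) (φ : ι → κ → ℝ) :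
    ∑ i ∈ s, z i * ∑ a ∈ t, w a * φ i a = ∑ a ∈ t, w a * ∑ i ∈ s, z i * φ i a := by
  simp_rw [Finset.mul_sum]
  rw [Finset.sum_comm]
  exact Finset.sum_congr rfl fun a _ => Finset.sum_congr rfl fun i _ => by ring

lemma sum_mul_indicator [DecidableEq ι] (F G : Finset ι) (hGF : G ⊆ F) (p : ι → ℝ) :
    ∑ u ∈ F, p u * (if u ∈ G then 1 else 0) = ∑ u ∈ G, p u := by
  rw [Finset.sum_congr rfl (fun u _ => by rw [mul_ite, mul_one, mul_zero]),
    Finset.sum_ite_mem, Finset.inter_eq_right.mpr hGF]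

lemma sum_delta_mul [DecidableEq ι] (E : Finset ι) {t : ι} (ht : t ∈ E) (x : ι → ℝ) :
    ∑ u ∈ E, (if t = u then (1:ℝ) else 0) * x u = x t := by
  rw [Finset.sum_congr rfl (fun u _ => by rw [ite_mul, one_mul, zero_mul]),
    Finset.sum_ite_eq]
  simp [ht]

lemma sum_sub_delta [DecidableEq ι] (E : Finset ι) {t : ι} (ht : t ∈ E) (p x : ι → ℝ) :
    ∑ u ∈ E, ((if t = u then (1:ℝ) else 0) - p u) * x u = x t - ∑ u ∈ E, p u * x u := by
  rw [Finset.sum_congr rfl (fun u _ => sub_mul _ _ (x u)), Finset.sum_sub_distrib,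
    sum_delta_mul E ht x]

end Algebra

variable {S A : Type} [Fintype S] [Fintype A] [DecidableEq S] {M : MDP S A}

lemma prReach_eq (σ : Scheduler M) (G : Finset S) :
    prReach M σ G = ⨆ n : ℕ, reachAux M σ G n [] M.init := rfl

lemma prReachFrom_eq (σ : Scheduler M) (G : Finset S) (s : S) :
    prReachFrom M σ G s = ⨆ n : ℕ, reachAux M σ G n [] s := rfl

lemma x_nonneg (M : MDP S A) (F : Finset S)
    (hform : ∀ s, ∃ σ : Scheduler M, 0 < prReachFrom M σ F s)
    (x : S → ℝ)
    (hx : ∀ s, s ∉ F → ∀ a, M.enabled s a → ∑ t ∈ Fᶜ, M.prob s a t * x t ≤ x s) :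
    ∀ s, s ∉ F → 0 ≤ x s := by
  intro s hs
  have hne : (Fᶜ : Finset S).Nonempty := ⟨s, Finset.mem_compl.mpr hs⟩
  obtain ⟨s0, hs0, hmin⟩ := Finset.exists_min_image (Fᶜ : Finset S) x hne
  have hs0F : s0 ∉ F := Finset.mem_compl.mp hs0
  by_contra hneg
  push_neg at hneg
  have hm : x s0 < 0 := lt_of_le_of_lt (hmin s (Finset.mem_compl.mpr hs)) hneg
  obtain ⟨σ, hσ⟩ := hform s0
  have claim : ∀ (n : ℕ) (h : List (S × A)) (t : S), t ∉ F →
      x s0 * (1 - reachAux M σ F n h t) ≤ x t := by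
    intro n
    induction n with
    | zero =>
      intro h t ht
      simp only [reachAux, if_neg ht]
      rw [sub_zero, mul_one]
      exact hmin t (Finset.mem_compl.mpr ht)
    | succ n ih =>
      intro h t ht
      simp only [reachAux, if_neg ht]
      rw [weight_one_sub _ (σ.choice_sum_one h t)]
      apply sum_choice_mul_le σ h t
      intro a ha
      have hsplit : ∑ u, M.prob t a u * reachAux M σ F n (h ++ [(t, a)]) u
          = (∑ u ∈ F, M.prob t a u)
            + ∑ u ∈ Fᶜ, M.prob t a u * reachAux M σ F n (h ++ [(t, a)]) u := by
        rw [← Finset.sum_add_sum_compl F]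
        congr 1
        exact Finset.sum_congr rfl fun u hu => by rw [reachAux_of_mem σ hu, mul_one]
      have hone' : (∑ u ∈ F, M.prob t a u) + ∑ u ∈ Fᶜ, M.prob t a u = 1 := by
        rw [Finset.sum_add_sum_compl]; exact prob_sum_one ha
      rw [hsplit, split_one_sub _ _ _ _ _ hone']
      calc ∑ u ∈ Fᶜ, M.prob t a u * (x s0 * (1 - reachAux M σ F n (h ++ [(t, a)]) u))
          ≤ ∑ u ∈ Fᶜ, M.prob t a u * x u := Finset.sum_le_sum fun u hu =>
            mul_le_mul_of_nonneg_left (ih _ u (Finset.mem_compl.mp hu)) (prob_nonneg M t a u)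
        _ ≤ x t := hx t ht a ha
  have hr : ∀ n, reachAux M σ F n [] s0 ≤ 0 := by
    intro n
    have := claim n [] s0 hs0F
    nlinarith
  have hle : prReachFrom M σ F s0 ≤ 0 := by
    rw [prReachFrom_eq]
    exact Real.iSup_le hr le_rfl
  linarith

/-- soundness direction of the certificate theorem -/
lemma soundness (M : MDP S A) (F : Finset S)
    (habs : ∀ s ∈ F, ∀ a, M.enabled s a → M.prob s a s = 1)
    (hform : ∀ s, ∃ σ : MDP.Scheduler M, 0 < MDP.prReachFrom M σ F s)
    (hinit : M.init ∉ F)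
    {k : ℕ} (G : Fin k → Finset S) (hG : ∀ i, G i ⊆ F) (lam : Fin k → ℝ)
    (x : S → ℝ) (z : Fin k → ℝ) (hz : ∀ i, 0 ≤ z i)
    (hcons : ∀ p : S × A, p.1 ∉ F → M.enabled p.1 p.2 →
          ∑ i, (∑ t ∈ G i, M.prob p.1 p.2 t) * z i ≤
            ∑ s ∈ Fᶜ, ((if p.1 = s then (1 : ℝ) else 0) - M.prob p.1 p.2 s) * x s)
    (hlt : x M.init < ∑ i, lam i * z i) :
    ∀ σ : MDP.Scheduler M, ∃ i, MDP.prReach M σ (G i) < lam i := by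
  have hx0 : ∀ s, s ∉ F → 0 ≤ x s := by
    apply x_nonneg M F hform
    intro s hs a ha
    have hc := hcons (s, a) hs ha
    have hTz : 0 ≤ ∑ i, (∑ t ∈ G i, M.prob s a t) * z i :=
      Finset.sum_nonneg fun i _ => mul_nonneg
        (Finset.sum_nonneg fun t _ => prob_nonneg M s a t) (hz i)
    rw [sum_sub_delta _ (Finset.mem_compl.mpr hs)] at hc
    linarith
  intro σ
  by_contra h2
  push_neg at h2
  have claim : ∀ (n : ℕ) (h : List (S × A)) (t : S), t ∉ F →
      ∑ i, z i * reachAux M σ (G i) n h t ≤ x t := by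
    intro n
    induction n with
    | zero =>
      intro h t ht
      have h0 : ∀ i : Fin k, reachAux M σ (G i) 0 h t = 0 := fun i => by
        simp only [reachAux, if_neg (fun hc => ht (hG i hc))]
      simp only [h0, mul_zero, Finset.sum_const_zero]
      exact hx0 t ht
    | succ n ih =>
      intro h t ht
      have hnotG : ∀ i : Fin k, t ∉ G i := fun i hc => ht (hG i hc)
      simp only [reachAux]
      rw [Finset.sum_congr rfl (fun i (_ : i ∈ Finset.univ) => by rw [if_neg (hnotG i)])]
      rw [swap_zw]
      apply sum_choice_mul_le σ h t
      intro a ha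
      have hin : ∀ i : Fin k,
          ∑ u, M.prob t a u * reachAux M σ (G i) n (h ++ [(t, a)]) u
          = (∑ u ∈ G i, M.prob t a u)
            + ∑ u ∈ Fᶜ, M.prob t a u * reachAux M σ (G i) n (h ++ [(t, a)]) u := by
        intro i
        rw [← Finset.sum_add_sum_compl F]
        congr 1
        rw [Finset.sum_congr rfl (fun u hu => by
          rw [reachAux_absorbing habs σ (hG i) n _ u hu])]
        exact sum_mul_indicator F (G i) (hG i) _
      rw [Finset.sum_congr rfl (fun i (_ : i ∈ Finset.univ) => by rw [hin i])]
      have hsum2 : ∑ i, z i * ((∑ u ∈ G i, M.prob t a u)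
            + ∑ u ∈ Fᶜ, M.prob t a u * reachAux M σ (G i) n (h ++ [(t, a)]) u)
          = (∑ i, (∑ u ∈ G i, M.prob t a u) * z i)
            + ∑ u ∈ Fᶜ, M.prob t a u *
              (∑ i, z i * reachAux M σ (G i) n (h ++ [(t, a)]) u) := by
        rw [Finset.sum_congr rfl (fun i (_ : i ∈ Finset.univ) => mul_add (z i) _ _),
          Finset.sum_add_distrib, ← swap_zw]
        congr 1
        exact Finset.sum_congr rfl fun i _ => mul_comm _ _
      rw [hsum2]
      have hc := hcons (t, a) ht ha
      rw [sum_sub_delta _ (Finset.mem_compl.mpr ht)] at hc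
      have hrec : ∑ u ∈ Fᶜ, M.prob t a u *
            (∑ i, z i * reachAux M σ (G i) n (h ++ [(t, a)]) u)
          ≤ ∑ u ∈ Fᶜ, M.prob t a u * x u := Finset.sum_le_sum fun u hu =>
            mul_le_mul_of_nonneg_left (ih _ u (Finset.mem_compl.mp hu)) (prob_nonneg M t a u)
      linarith
  have hZ : 0 ≤ ∑ i, z i := Finset.sum_nonneg fun i _ => hz i
  have hfinal : ∑ i, lam i * z i ≤ x M.init := by
    apply le_of_forall_pos_le_add
    intro ε hε
    set ε' : ℝ := ε / ((∑ i, z i) + 1) with hε'def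
    have hε' : 0 < ε' := by positivity
    have hex : ∀ i : Fin k, ∃ n : ℕ, lam i - ε' < reachAux M σ (G i) n [] M.init := by
      intro i
      have h3 : lam i - ε' < ⨆ n : ℕ, reachAux M σ (G i) n [] M.init := by
        rw [← prReach_eq]
        exact lt_of_lt_of_le (by linarith) (h2 i)
      exact exists_lt_of_lt_ciSup h3
    choose nn hnn using hex
    set N : ℕ := Finset.univ.sup nn with hN
    have hmono : ∀ i : Fin k, lam i - ε' < reachAux M σ (G i) N [] M.init := fun i =>
      lt_of_lt_of_le (hnn i)
        (reachAux_mono' σ (G i) (Finset.le_sup (Finset.mem_univ i)) [] M.init)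
    have h4 : ∑ i, lam i * z i ≤ ∑ i, (reachAux M σ (G i) N [] M.init + ε') * z i :=
      Finset.sum_le_sum fun i _ =>
        mul_le_mul_of_nonneg_right (by linarith [hmono i]) (hz i)
    have h5 : ∑ i, (reachAux M σ (G i) N [] M.init + ε') * z i
        = (∑ i, z i * reachAux M σ (G i) N [] M.init) + ε' * ∑ i, z i := by
      rw [Finset.mul_sum, ← Finset.sum_add_distrib]
      exact Finset.sum_congr rfl fun i _ => by ring
    have h6 := claim N [] M.init hinit
    have h7 : ε' * ∑ i, z i ≤ ε := by
      have h8 : ε' * ((∑ i, z i) + 1) = ε := by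
        rw [hε'def]; field_simp
      nlinarith
    linarith
  linarith

end MDPFarkas
namespace MDPFarkas

open MDP Finset

set_option linter.unusedSectionVars false
set_option maxHeartbeats 1000000

variable {S A : Type} [Fintype S] [Fintype A] [DecidableEq S] {M : MDP S A}

open Classical in
/-- the memoryless scheduler that plays proportionally to `y`. -/
noncomputable def propSched (M : MDP S A) (y : S × A → ℝ)
    (hsupp : ∀ p : S × A, y p ≠ 0 → M.enabled p.1 p.2) (hy0 : ∀ p, 0 ≤ y p) :
    Scheduler M where
  choice := fun _ s a =>
    if 0 < ∑ b, y (s, b) then y (s, a) / ∑ b, y (s, b)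
    else if a = Classical.choose (M.exists_enabled s) then 1 else 0
  choice_nonneg := by
    intro h s a
    split
    · rename_i hp; exact div_nonneg (hy0 (s, a)) hp.le
    · split <;> norm_num
  choice_sum_one := by
    intro h s
    by_cases hpos : 0 < ∑ b, y (s, b)
    · simp only [if_pos hpos]
      rw [← Finset.sum_div, div_self (ne_of_gt hpos)]
    · simp only [if_neg hpos]
      rw [Finset.sum_ite_eq' Finset.univ (Classical.choose (M.exists_enabled s)) (fun _ => (1:ℝ))]
      simp
  choice_support := by
    intro h s a hne
    by_cases hpos : 0 < ∑ b, y (s, b)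
    · simp only [if_pos hpos] at hne
      have : y (s, a) ≠ 0 := fun hc => hne (by rw [hc, zero_div])
      exact hsupp (s, a) this
    · simp only [if_neg hpos] at hne
      by_cases haeq : a = Classical.choose (M.exists_enabled s)
      · rw [haeq]; exact Classical.choose_spec (M.exists_enabled s)
      · simp [haeq] at hne

lemma propSched_histfree (M : MDP S A) (y : S × A → ℝ) (hsupp) (hy0) :
    ∀ (h h' : List (S × A)) (s : S) (a : A),
      (propSched M y hsupp hy0).choice h s a = (propSched M y hsupp hy0).choice h' s a :=
  fun _ _ _ _ => rfl

lemma reachAux_histfree (σ : Scheduler M)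
    (hσ : ∀ h h' s a, σ.choice h s a = σ.choice h' s a) (G : Finset S) :
    ∀ (n : ℕ) (h h' : List (S × A)) (s : S),
      reachAux M σ G n h s = reachAux M σ G n h' s := by
  intro n
  induction n with
  | zero => intros; rfl
  | succ n ih =>
    intro h h' s
    simp only [reachAux]
    split
    · rfl
    · apply Finset.sum_congr rfl
      intro a _
      rw [hσ h h' s a]
      congr 1
      exact Finset.sum_congr rfl fun t _ => by rw [ih (h ++ [(s, a)]) (h' ++ [(s, a)]) t]

/-- step distributions of the Markov chain induced by memoryless weights `w`,
killed upon entering `F`. -/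
noncomputable def muSeq (M : MDP S A) (F : Finset S) (w : S → A → ℝ) : ℕ → S → ℝ
  | 0 => fun s => if s = M.init then 1 else 0
  | (m+1) => fun s => if s ∈ F then 0
      else ∑ t ∈ Fᶜ, ∑ a, muSeq M F w m t * w t a * M.prob t a s

lemma muSeq_nonneg (F : Finset S) {w : S → A → ℝ} (hw0 : ∀ s a, 0 ≤ w s a) :
    ∀ (m : ℕ) (s : S), 0 ≤ muSeq M F w m s := by
  intro m
  induction m with
  | zero => intro s; simp only [muSeq]; split <;> norm_num
  | succ m ih =>
    intro s
    simp only [muSeq]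
    split
    · exact le_refl 0
    · exact Finset.sum_nonneg fun t _ => Finset.sum_nonneg fun a _ =>
        mul_nonneg (mul_nonneg (ih t) (hw0 t a)) (prob_nonneg M t a s)

/-- cumulated occupation measure satisfies the flow identity. -/
lemma cum_flow (F : Finset S) (w : S → A → ℝ) (m : ℕ) {s' : S} (hs' : s' ∉ F) :
    ∑ j ∈ Finset.range (m+1), muSeq M F w j s'
      = (if s' = M.init then (1:ℝ) else 0)
        + ∑ t ∈ Fᶜ, ∑ a, (∑ j ∈ Finset.range m, muSeq M F w j t * w t a) * M.prob t a s' := by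
  rw [Finset.sum_range_succ']
  have h1 : ∀ j, muSeq M F w (j+1) s'
      = ∑ t ∈ Fᶜ, ∑ a, muSeq M F w j t * w t a * M.prob t a s' := by
    intro j; simp only [muSeq, if_neg hs']
  rw [Finset.sum_congr rfl (fun j (_ : j ∈ Finset.range m) => h1 j)]
  have h2 : muSeq M F w 0 s' = if s' = M.init then (1:ℝ) else 0 := rfl
  rw [h2, add_comm]
  congr 1
  rw [Finset.sum_comm]
  apply Finset.sum_congr rfl
  intro t _
  rw [Finset.sum_comm]
  apply Finset.sum_congr rfl
  intro a _
  rw [Finset.sum_mul]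

end MDPFarkas
namespace MDPFarkas

open MDP Finset

set_option linter.unusedSectionVars false
set_option maxHeartbeats 1000000

variable {S A : Type} [Fintype S] [Fintype A] [DecidableEq S] {M : MDP S A}

/-- the backward flow equation for `y`, in forward form. -/
lemma y_flow (F : Finset S) (y : S × A → ℝ)
    (hyF : ∀ p : S × A, p.1 ∈ F → y p = 0)
    {s' : S} (hs' : s' ∉ F)
    (hflow : ∑ p : S × A, y p * ((if p.1 = s' then (1:ℝ) else 0) - M.prob p.1 p.2 s')
          = (if s' = M.init then 1 else 0)) :
    ∑ b, y (s', b)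
      = (if s' = M.init then (1:ℝ) else 0)
        + ∑ t ∈ Fᶜ, ∑ a, y (t, a) * M.prob t a s' := by
  have h1 : ∑ p : S × A, y p * ((if p.1 = s' then (1:ℝ) else 0) - M.prob p.1 p.2 s')
      = (∑ p : S × A, y p * (if p.1 = s' then (1:ℝ) else 0))
        - ∑ p : S × A, y p * M.prob p.1 p.2 s' := by
    rw [← Finset.sum_sub_distrib]
    exact Finset.sum_congr rfl fun p _ => by ring
  have h2 : ∑ p : S × A, y p * (if p.1 = s' then (1:ℝ) else 0) = ∑ b, y (s', b) := by
    rw [Fintype.sum_prod_type]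
    have h3 : ∀ s : S, ∑ a, y (s, a) * (if s = s' then (1:ℝ) else 0)
        = if s = s' then ∑ a, y (s, a) else 0 := by
      intro s
      split <;> simp
    rw [Finset.sum_congr rfl fun s _ => h3 s, Finset.sum_ite_eq' Finset.univ s' fun s => ∑ a, y (s, a)]
    simp
  have h4 : ∑ p : S × A, y p * M.prob p.1 p.2 s'
      = ∑ t ∈ Fᶜ, ∑ a, y (t, a) * M.prob t a s' := by
    rw [Fintype.sum_prod_type, ← Finset.sum_add_sum_compl F]
    have h5 : ∑ t ∈ F, ∑ a, y (t, a) * M.prob t a s' = 0 :=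
      Finset.sum_eq_zero fun t ht => Finset.sum_eq_zero fun a _ => by
        rw [hyF (t, a) ht, zero_mul]
    rw [h5, zero_add]
  rw [h1, h2, h4] at hflow
  linarith

/-- cumulated occupation measures are dominated by `y`. -/
lemma cum_le_y (F : Finset S) (y : S × A → ℝ) (w : S → A → ℝ)
    (hw0 : ∀ s a, 0 ≤ w s a) (hw1 : ∀ s, ∑ a, w s a = 1)
    (hy0 : ∀ p, 0 ≤ y p)
    (hyF : ∀ p : S × A, p.1 ∈ F → y p = 0)
    (hyw : ∀ s a, y (s, a) = (∑ b, y (s, b)) * w s a)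
    (hflow : ∀ s', s' ∉ F →
        ∑ p : S × A, y p * ((if p.1 = s' then (1:ℝ) else 0) - M.prob p.1 p.2 s')
          = (if s' = M.init then 1 else 0)) :
    ∀ (m : ℕ) (s : S) (a : A), s ∉ F →
      ∑ j ∈ Finset.range m, muSeq M F w j s * w s a ≤ y (s, a) := by
  intro m
  induction m with
  | zero => intro s a _; simp [hy0 (s, a)]
  | succ m ih =>
    intro s a hs
    -- cumulative state mass bounded by total y-outflow
    have hD : ∑ j ∈ Finset.range (m+1), muSeq M F w j s ≤ ∑ b, y (s, b) := by
      rw [cum_flow F w m hs, y_flow F y hyF hs (hflow s hs)]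
      apply add_le_add (le_refl _)
      apply Finset.sum_le_sum
      intro t ht
      apply Finset.sum_le_sum
      intro b _
      exact mul_le_mul_of_nonneg_right (ih t b (Finset.mem_compl.mp ht))
        (prob_nonneg M t b s)
    calc ∑ j ∈ Finset.range (m+1), muSeq M F w j s * w s a
        = (∑ j ∈ Finset.range (m+1), muSeq M F w j s) * w s a := by
          rw [Finset.sum_mul]
      _ ≤ (∑ b, y (s, b)) * w s a :=
          mul_le_mul_of_nonneg_right hD (hw0 s a)
      _ = y (s, a) := (hyw s a).symm

/-- lower bound for finite-horizon reachability via occupation measures. -/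
lemma reach_lb (F : Finset S)
    (habs : ∀ s ∈ F, ∀ a, M.enabled s a → M.prob s a s = 1)
    (Gi : Finset S) (hGiF : Gi ⊆ F)
    (σ : Scheduler M) (hσh : ∀ h h' s a, σ.choice h s a = σ.choice h' s a)
    (w : S → A → ℝ) (hmem : ∀ h s a, σ.choice h s a = w s a)
    (hw0 : ∀ s a, 0 ≤ w s a) :
    ∀ (n m : ℕ),
      ∑ j ∈ Finset.range n, (∑ s ∈ Fᶜ, ∑ a,
          muSeq M F w (m+j) s * w s a * ∑ t ∈ Gi, M.prob s a t)
        ≤ ∑ s ∈ Fᶜ, muSeq M F w m s * reachAux M σ Gi n [] s := by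
  intro n
  induction n with
  | zero =>
    intro m
    simp only [Finset.range_zero, Finset.sum_empty]
    exact Finset.sum_nonneg fun s _ => mul_nonneg (muSeq_nonneg F hw0 m s)
      (reachAux_nonneg σ Gi 0 [] s)
  | succ n ih =>
    intro m
    -- unfold one step of reachAux on Fᶜ
    have hreach : ∀ s ∈ Fᶜ, reachAux M σ Gi (n+1) [] s
        = ∑ a, w s a * ((∑ t ∈ Gi, M.prob s a t)
            + ∑ t ∈ Fᶜ, M.prob s a t * reachAux M σ Gi n [] t) := by
      intro s hsc
      have hs : s ∉ F := Finset.mem_compl.mp hsc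
      have hsG : s ∉ Gi := fun hc => hs (hGiF hc)
      simp only [reachAux, if_neg hsG]
      apply Finset.sum_congr rfl
      intro a _
      rw [hmem [] s a]
      congr 1
      have hhist : ∀ t, reachAux M σ Gi n ([] ++ [(s, a)]) t = reachAux M σ Gi n [] t :=
        fun t => reachAux_histfree σ hσh Gi n _ [] t
      rw [Finset.sum_congr rfl fun t (_ : t ∈ Finset.univ) => by rw [hhist t]]
      rw [← Finset.sum_add_sum_compl F]
      congr 1
      rw [Finset.sum_congr rfl (fun t ht => by
        rw [reachAux_absorbing habs σ hGiF n _ t ht])]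
      exact sum_mul_indicator F Gi hGiF _
    rw [Finset.sum_congr rfl fun s (hs : s ∈ (Fᶜ : Finset S)) => by rw [hreach s hs]]
    -- distribute
    have hdist : ∀ s ∈ Fᶜ, muSeq M F w m s * ∑ a, w s a * ((∑ t ∈ Gi, M.prob s a t)
            + ∑ t ∈ Fᶜ, M.prob s a t * reachAux M σ Gi n [] t)
        = (∑ a, muSeq M F w m s * w s a * ∑ t ∈ Gi, M.prob s a t)
          + ∑ a, ∑ t ∈ Fᶜ, muSeq M F w m s * w s a * M.prob s a t
              * reachAux M σ Gi n [] t := by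
      intro s _
      rw [Finset.mul_sum, ← Finset.sum_add_distrib]
      apply Finset.sum_congr rfl
      intro a _
      calc muSeq M F w m s * (w s a * ((∑ t ∈ Gi, M.prob s a t)
              + ∑ t ∈ Fᶜ, M.prob s a t * reachAux M σ Gi n [] t))
          = muSeq M F w m s * w s a * (∑ t ∈ Gi, M.prob s a t)
            + (muSeq M F w m s * w s a)
              * ∑ t ∈ Fᶜ, M.prob s a t * reachAux M σ Gi n [] t := by ring
        _ = _ := by
            congr 1
            rw [Finset.mul_sum]
            exact Finset.sum_congr rfl fun t _ => by ring
    rw [Finset.sum_congr rfl hdist, Finset.sum_add_distrib]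
    -- second part equals next-step occupation
    have hsecond : ∑ s ∈ Fᶜ, ∑ a, ∑ t ∈ Fᶜ, muSeq M F w m s * w s a * M.prob s a t
              * reachAux M σ Gi n [] t
        = ∑ t ∈ Fᶜ, muSeq M F w (m+1) t * reachAux M σ Gi n [] t := by
      rw [Finset.sum_congr rfl (fun s (_ : s ∈ Fᶜ) => Finset.sum_comm),
        Finset.sum_comm]
      apply Finset.sum_congr rfl
      intro t ht
      have hmu : muSeq M F w (m+1) t = ∑ s ∈ Fᶜ, ∑ a, muSeq M F w m s * w s a * M.prob s a t := by
        simp only [muSeq, if_neg (Finset.mem_compl.mp ht)]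
      rw [hmu, Finset.sum_mul]
      apply Finset.sum_congr rfl
      intro s _
      rw [Finset.sum_mul]
    rw [hsecond]
    -- split the range sum
    rw [Finset.sum_range_succ']
    have hshift : ∀ j ∈ Finset.range n,
        (∑ s ∈ Fᶜ, ∑ a, muSeq M F w (m+(j+1)) s * w s a * ∑ t ∈ Gi, M.prob s a t)
        = ∑ s ∈ Fᶜ, ∑ a, muSeq M F w ((m+1)+j) s * w s a * ∑ t ∈ Gi, M.prob s a t := by
      intro j _
      rw [show m + (j+1) = (m+1)+j from by omega]
    rw [Finset.sum_congr rfl hshift]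
    have hzero : (∑ s ∈ Fᶜ, ∑ a, muSeq M F w (m+0) s * w s a * ∑ t ∈ Gi, M.prob s a t)
        = ∑ s ∈ Fᶜ, ∑ a, muSeq M F w m s * w s a * ∑ t ∈ Gi, M.prob s a t := by
      rw [Nat.add_zero]
    rw [hzero]
    have := ih (m+1)
    linarith

end MDPFarkas
namespace MDPFarkas

open MDP Finset Filter Topology

set_option linter.unusedSectionVars false
set_option maxHeartbeats 2000000

variable {S A : Type} [Fintype S] [Fintype A] [DecidableEq S] {M : MDP S A}

/-- cumulated occupation pair-measure. -/
noncomputable def cumOcc (M : MDP S A) (F : Finset S) (w : S → A → ℝ) (m : ℕ) (s : S) (a : A) :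
    ℝ := ∑ j ∈ Finset.range m, muSeq M F w j s * w s a

/-- its limit. -/
noncomputable def climOcc (M : MDP S A) (F : Finset S) (w : S → A → ℝ) (s : S) (a : A) : ℝ :=
  ⨆ m, cumOcc M F w m s a

lemma completeness_aux (M : MDP S A) (F : Finset S)
    (habs : ∀ s ∈ F, ∀ a, M.enabled s a → M.prob s a s = 1)
    (hinit : M.init ∉ F)
    {k : ℕ} (G : Fin k → Finset S) (hG : ∀ i, G i ⊆ F) (lam : Fin k → ℝ)
    (y : S × A → ℝ)
    (hy0 : ∀ p, 0 ≤ y p)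
    (hysupp : ∀ p : S × A, y p ≠ 0 → p.1 ∉ F ∧ M.enabled p.1 p.2)
    (hflow : ∀ s', s' ∉ F →
        ∑ p : S × A, y p * ((if p.1 = s' then (1:ℝ) else 0) - M.prob p.1 p.2 s')
          = (if s' = M.init then 1 else 0))
    (hT : ∀ i, lam i ≤ ∑ p : S × A, y p * ∑ t ∈ G i, M.prob p.1 p.2 t) :
    ∃ σ : Scheduler M, ∀ i, lam i ≤ prReach M σ (G i) := by
  classical
  have hsuppE : ∀ p : S × A, y p ≠ 0 → M.enabled p.1 p.2 := fun p hp => (hysupp p hp).2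
  have hyF : ∀ p : S × A, p.1 ∈ F → y p = 0 := fun p hp => by
    by_contra hc; exact (hysupp p hc).1 hp
  have hydis : ∀ s a, ¬ M.enabled s a → y (s, a) = 0 := fun s a ha => by
    by_contra hc; exact ha (hsuppE (s, a) hc)
  set σ := propSched M y hsuppE hy0 with hσdef
  set w : S → A → ℝ := fun s a => σ.choice [] s a with hwdef
  have hσh := propSched_histfree M y hsuppE hy0
  have hmem : ∀ (h : List (S × A)) s a, σ.choice h s a = w s a := fun h s a => hσh h [] s a
  have hw0 : ∀ s a, 0 ≤ w s a := fun s a => σ.choice_nonneg [] s a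
  have hw1 : ∀ s, ∑ a, w s a = 1 := fun s => σ.choice_sum_one [] s
  have hyw : ∀ s a, y (s, a) = (∑ b, y (s, b)) * w s a := by
    intro s a
    have hwa : w s a = if 0 < ∑ b, y (s, b) then y (s, a) / ∑ b, y (s, b)
        else if a = Classical.choose (M.exists_enabled s) then 1 else 0 := rfl
    by_cases hpos : 0 < ∑ b, y (s, b)
    · rw [hwa, if_pos hpos]
      field_simp
    · have hzero : ∑ b, y (s, b) = 0 :=
        le_antisymm (not_lt.mp hpos) (Finset.sum_nonneg fun b _ => hy0 (s, b))
      have hya : y (s, a) = 0 :=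
        (Finset.sum_eq_zero_iff_of_nonneg (fun b _ => hy0 (s, b))).mp hzero a (Finset.mem_univ a)
      rw [hya, hzero, zero_mul]
  -- basic facts about cumOcc
  have hCmono : ∀ s a, Monotone (fun m => cumOcc M F w m s a) := by
    intro s a
    apply monotone_nat_of_le_succ
    intro m
    unfold cumOcc
    rw [Finset.sum_range_succ]
    exact le_add_of_nonneg_right (mul_nonneg (muSeq_nonneg F hw0 m s) (hw0 s a))
  have hCley : ∀ m s a, s ∉ F → cumOcc M F w m s a ≤ y (s, a) := fun m s a hs =>
    cum_le_y F y w hw0 hw1 hy0 hyF hyw hflow m s a hs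
  have hbdd : ∀ s a, s ∉ F → BddAbove (Set.range fun m => cumOcc M F w m s a) := by
    intro s a hs
    refine ⟨y (s, a), ?_⟩
    rintro v ⟨m, rfl⟩
    exact hCley m s a hs
  have htend : ∀ s a, s ∉ F →
      Tendsto (fun m => cumOcc M F w m s a) atTop (𝓝 (climOcc M F w s a)) := fun s a hs =>
    tendsto_atTop_ciSup (hCmono s a) (hbdd s a hs)
  have hclley : ∀ s a, s ∉ F → climOcc M F w s a ≤ y (s, a) := fun s a hs =>
    ciSup_le fun m => hCley m s a hs
  have hCge : ∀ m s a, s ∉ F → cumOcc M F w m s a ≤ climOcc M F w s a := fun m s a hs =>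
    le_ciSup (hbdd s a hs) m
  -- the limit flow equation
  have hflowlim : ∀ s', s' ∉ F →
      ∑ a, climOcc M F w s' a
        = (if s' = M.init then (1:ℝ) else 0)
          + ∑ t ∈ Fᶜ, ∑ a, climOcc M F w t a * M.prob t a s' := by
    intro s' hs'
    have heq : ∀ m : ℕ, ∑ a, cumOcc M F w (m+1) s' a
        = (if s' = M.init then (1:ℝ) else 0)
          + ∑ t ∈ Fᶜ, ∑ a, cumOcc M F w m t a * M.prob t a s' := by
      intro m
      have hl : ∑ a, cumOcc M F w (m+1) s' a = ∑ j ∈ Finset.range (m+1), muSeq M F w j s' := by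
        unfold cumOcc
        rw [Finset.sum_comm]
        apply Finset.sum_congr rfl
        intro j _
        rw [← Finset.mul_sum, hw1, mul_one]
      rw [hl, cum_flow F w m hs']
      rfl
    have h1 : Tendsto (fun m => ∑ a, cumOcc M F w (m+1) s' a) atTop
        (𝓝 (∑ a, climOcc M F w s' a)) := by
      apply tendsto_finset_sum
      intro a _
      exact (htend s' a hs').comp (tendsto_add_atTop_nat 1)
    have h2 : Tendsto (fun m => (if s' = M.init then (1:ℝ) else 0)
          + ∑ t ∈ Fᶜ, ∑ a, cumOcc M F w m t a * M.prob t a s') atTop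
        (𝓝 ((if s' = M.init then (1:ℝ) else 0)
          + ∑ t ∈ Fᶜ, ∑ a, climOcc M F w t a * M.prob t a s')) := by
      apply Tendsto.const_add
      apply tendsto_finset_sum
      intro t ht
      apply tendsto_finset_sum
      intro a _
      exact (htend t a (Finset.mem_compl.mp ht)).mul_const _
    have h1' : Tendsto (fun m => (if s' = M.init then (1:ℝ) else 0)
          + ∑ t ∈ Fᶜ, ∑ a, cumOcc M F w m t a * M.prob t a s') atTop
        (𝓝 (∑ a, climOcc M F w s' a)) := by
      have hfe : (fun m => (if s' = M.init then (1:ℝ) else 0)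
          + ∑ t ∈ Fᶜ, ∑ a, cumOcc M F w m t a * M.prob t a s')
          = fun m => ∑ a, cumOcc M F w (m+1) s' a := funext fun m => (heq m).symm
      rw [hfe]
      exact h1
    exact tendsto_nhds_unique h1' h2
  -- aggregate flow identities
  have hYagg : ∑ s ∈ Fᶜ, ∑ a, y (s, a)
      = (∑ s ∈ Fᶜ, (if s = M.init then (1:ℝ) else 0))
        + ∑ t ∈ Fᶜ, ∑ a, y (t, a) * ∑ s ∈ Fᶜ, M.prob t a s := by
    rw [Finset.sum_congr rfl (fun s' (hs' : s' ∈ (Fᶜ : Finset S)) =>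
      y_flow F y hyF (Finset.mem_compl.mp hs') (hflow s' (Finset.mem_compl.mp hs')))]
    rw [Finset.sum_add_distrib]
    congr 1
    rw [Finset.sum_comm]
    apply Finset.sum_congr rfl
    intro t _
    rw [Finset.sum_comm]
    apply Finset.sum_congr rfl
    intro a _
    rw [← Finset.mul_sum]
  have hCagg : ∑ s ∈ Fᶜ, ∑ a, climOcc M F w s a
      = (∑ s ∈ Fᶜ, (if s = M.init then (1:ℝ) else 0))
        + ∑ t ∈ Fᶜ, ∑ a, climOcc M F w t a * ∑ s ∈ Fᶜ, M.prob t a s := by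
    rw [Finset.sum_congr rfl (fun s' (hs' : s' ∈ (Fᶜ : Finset S)) =>
      hflowlim s' (Finset.mem_compl.mp hs'))]
    rw [Finset.sum_add_distrib]
    congr 1
    rw [Finset.sum_comm]
    apply Finset.sum_congr rfl
    intro t _
    rw [Finset.sum_comm]
    apply Finset.sum_congr rfl
    intro a _
    rw [← Finset.mul_sum]
  -- the leak identity: no mass of y - climOcc exits Fᶜ
  have hsum0 : ∑ s ∈ Fᶜ, ∑ a,
      ((y (s, a) - climOcc M F w s a) * (1 - ∑ t ∈ Fᶜ, M.prob s a t)) = 0 := by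
    have hexp : ∑ s ∈ Fᶜ, ∑ a,
        ((y (s, a) - climOcc M F w s a) * (1 - ∑ t ∈ Fᶜ, M.prob s a t))
        = ((∑ s ∈ Fᶜ, ∑ a, y (s, a)) - ∑ s ∈ Fᶜ, ∑ a, climOcc M F w s a)
          - ((∑ s ∈ Fᶜ, ∑ a, y (s, a) * ∑ t ∈ Fᶜ, M.prob s a t)
            - ∑ s ∈ Fᶜ, ∑ a, climOcc M F w s a * ∑ t ∈ Fᶜ, M.prob s a t) := by
      rw [Finset.sum_congr rfl (fun s (_ : s ∈ (Fᶜ : Finset S)) =>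
        Finset.sum_congr rfl (fun a (_ : a ∈ (Finset.univ : Finset A)) => by
          show (y (s, a) - climOcc M F w s a) * (1 - ∑ t ∈ Fᶜ, M.prob s a t)
            = (y (s, a) - climOcc M F w s a)
              - (y (s, a) * (∑ t ∈ Fᶜ, M.prob s a t)
                - climOcc M F w s a * ∑ t ∈ Fᶜ, M.prob s a t)
          ring))]
      simp only [Finset.sum_sub_distrib]
    rw [hexp]
    linarith [hYagg, hCagg]
  have hterm0 : ∀ s ∈ (Fᶜ : Finset S), ∀ a,
      (y (s, a) - climOcc M F w s a) * (1 - ∑ t ∈ Fᶜ, M.prob s a t) = 0 := by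
    have hnn : ∀ s ∈ (Fᶜ : Finset S), ∀ a ∈ (Finset.univ : Finset A),
        0 ≤ (y (s, a) - climOcc M F w s a) * (1 - ∑ t ∈ Fᶜ, M.prob s a t) := by
      intro s hs a _
      apply mul_nonneg
      · have := hclley s a (Finset.mem_compl.mp hs); linarith
      · have := sum_prob_le_one (M := M) s a (Fᶜ : Finset S); linarith
    have houter := (Finset.sum_eq_zero_iff_of_nonneg
      (fun s hs => Finset.sum_nonneg (hnn s hs))).mp hsum0
    intro s hs a
    exact (Finset.sum_eq_zero_iff_of_nonneg (hnn s hs)).mp (houter s hs) a (Finset.mem_univ a)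
  -- hence y and climOcc have the same reach-weights
  have hyclT : ∀ i : Fin k, ∑ s ∈ Fᶜ, ∑ a, y (s, a) * ∑ t ∈ G i, M.prob s a t
      = ∑ s ∈ Fᶜ, ∑ a, climOcc M F w s a * ∑ t ∈ G i, M.prob s a t := by
    intro i
    apply Finset.sum_congr rfl
    intro s hs
    apply Finset.sum_congr rfl
    intro a _
    by_cases hen : M.enabled s a
    · have h10 : (∑ t ∈ F, M.prob s a t) + ∑ t ∈ Fᶜ, M.prob s a t = 1 := by
        rw [Finset.sum_add_sum_compl]; exact prob_sum_one hen
      have hTle : ∑ t ∈ G i, M.prob s a t ≤ 1 - ∑ t ∈ Fᶜ, M.prob s a t := by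
        have : ∑ t ∈ G i, M.prob s a t ≤ ∑ t ∈ F, M.prob s a t :=
          Finset.sum_le_sum_of_subset_of_nonneg (hG i) fun t _ _ => prob_nonneg M s a t
        linarith
      have hT0 : 0 ≤ ∑ t ∈ G i, M.prob s a t :=
        Finset.sum_nonneg fun t _ => prob_nonneg M s a t
      have hξ : 0 ≤ y (s, a) - climOcc M F w s a := by
        have := hclley s a (Finset.mem_compl.mp hs); linarith
      have h0 := hterm0 s hs a
      have hle : (y (s, a) - climOcc M F w s a) * (∑ t ∈ G i, M.prob s a t)
          ≤ (y (s, a) - climOcc M F w s a) * (1 - ∑ t ∈ Fᶜ, M.prob s a t) :=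
        mul_le_mul_of_nonneg_left hTle hξ
      have hge : 0 ≤ (y (s, a) - climOcc M F w s a) * (∑ t ∈ G i, M.prob s a t) :=
        mul_nonneg hξ hT0
      nlinarith
    · have hTz : ∑ t ∈ G i, M.prob s a t = 0 :=
        Finset.sum_eq_zero fun t _ => prob_disabled hen t
      rw [hTz, mul_zero, mul_zero]
  -- finite-horizon lower bounds
  refine ⟨σ, ?_⟩
  intro i
  have hinit_sum : ∀ n, ∑ s ∈ Fᶜ, muSeq M F w 0 s * reachAux M σ (G i) n [] s
      = reachAux M σ (G i) n [] M.init := by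
    intro n
    have hμ0 : ∀ s, muSeq M F w 0 s = if s = M.init then (1:ℝ) else 0 := fun s => rfl
    rw [Finset.sum_congr rfl (fun s (_ : s ∈ (Fᶜ : Finset S)) => by
      rw [hμ0 s, ite_mul, one_mul, zero_mul])]
    rw [Finset.sum_ite_eq' (Fᶜ : Finset S) M.init (fun s => reachAux M σ (G i) n [] s)]
    simp [Finset.mem_compl.mpr hinit]
  have hswap : ∀ n : ℕ, ∑ j ∈ Finset.range n, (∑ s ∈ Fᶜ, ∑ a,
        muSeq M F w j s * w s a * ∑ t ∈ G i, M.prob s a t)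
      = ∑ s ∈ Fᶜ, ∑ a, cumOcc M F w n s a * ∑ t ∈ G i, M.prob s a t := by
    intro n
    rw [Finset.sum_comm]
    apply Finset.sum_congr rfl
    intro s _
    rw [Finset.sum_comm]
    apply Finset.sum_congr rfl
    intro a _
    unfold cumOcc
    rw [Finset.sum_mul]
  have hrb : ∀ n : ℕ, ∑ s ∈ Fᶜ, ∑ a, cumOcc M F w n s a * ∑ t ∈ G i, M.prob s a t
      ≤ prReach M σ (G i) := by
    intro n
    have h1 := reach_lb F habs (G i) (hG i) σ hσh w hmem hw0 n 0
    have h2 : ∀ j ∈ Finset.range n, (∑ s ∈ Fᶜ, ∑ a,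
          muSeq M F w (0+j) s * w s a * ∑ t ∈ G i, M.prob s a t)
        = ∑ s ∈ Fᶜ, ∑ a, muSeq M F w j s * w s a * ∑ t ∈ G i, M.prob s a t := by
      intro j _
      rw [Nat.zero_add]
    rw [Finset.sum_congr rfl h2] at h1
    rw [← hswap n]
    calc ∑ j ∈ Finset.range n, (∑ s ∈ Fᶜ, ∑ a,
          muSeq M F w j s * w s a * ∑ t ∈ G i, M.prob s a t)
        ≤ ∑ s ∈ Fᶜ, muSeq M F w 0 s * reachAux M σ (G i) n [] s := h1
      _ = reachAux M σ (G i) n [] M.init := hinit_sum n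
      _ ≤ prReach M σ (G i) := by
          rw [prReach_eq]
          exact le_ciSup (prReachFrom_bddAbove σ (G i) M.init) n
  -- pass to the limit
  have hlim : Tendsto (fun n => ∑ s ∈ Fᶜ, ∑ a,
        cumOcc M F w n s a * ∑ t ∈ G i, M.prob s a t) atTop
      (𝓝 (∑ s ∈ Fᶜ, ∑ a, climOcc M F w s a * ∑ t ∈ G i, M.prob s a t)) := by
    apply tendsto_finset_sum
    intro s hs
    apply tendsto_finset_sum
    intro a _
    exact (htend s a (Finset.mem_compl.mp hs)).mul_const _
  have hfin : ∑ s ∈ Fᶜ, ∑ a, climOcc M F w s a * ∑ t ∈ G i, M.prob s a t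
      ≤ prReach M σ (G i) :=
    le_of_tendsto hlim (Filter.Eventually.of_forall hrb)
  have hTres : ∑ p : S × A, y p * ∑ t ∈ G i, M.prob p.1 p.2 t
      = ∑ s ∈ Fᶜ, ∑ a, y (s, a) * ∑ t ∈ G i, M.prob s a t := by
    rw [Fintype.sum_prod_type, ← Finset.sum_add_sum_compl F]
    have hF0 : ∑ s ∈ F, ∑ a, y (s, a) * ∑ t ∈ G i, M.prob s a t = 0 :=
      Finset.sum_eq_zero fun s hs => Finset.sum_eq_zero fun a _ => by
        rw [hyF (s, a) hs, zero_mul]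
    rw [hF0, zero_add]
  calc lam i ≤ ∑ p : S × A, y p * ∑ t ∈ G i, M.prob p.1 p.2 t := hT i
    _ = ∑ s ∈ Fᶜ, ∑ a, y (s, a) * ∑ t ∈ G i, M.prob s a t := hTres
    _ = ∑ s ∈ Fᶜ, ∑ a, climOcc M F w s a * ∑ t ∈ G i, M.prob s a t := hyclT i
    _ ≤ prReach M σ (G i) := hfin

end MDPFarkas
namespace MDPFarkas

open MDP Finset

lemma sum_ite_compl {S : Type} [Fintype S] [DecidableEq S] (F : Finset S) (f : S → ℝ) :
    ∑ s, (if s ∈ F then (0:ℝ) else f s) = ∑ s ∈ Fᶜ, f s := by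
  rw [← Finset.sum_add_sum_compl F]
  rw [Finset.sum_congr rfl (fun s (hs : s ∈ F) => if_pos hs),
    Finset.sum_congr rfl (fun s (hs : s ∈ (Fᶜ : Finset S)) => if_neg (Finset.mem_compl.mp hs))]
  simp

end MDPFarkas

/-- Farkas certificates for universally quantified disjunctive reachability queries with
strict upper bounds: every scheduler satisfies `⋁ᵢ Pr^σ(◇Gᵢ) < λᵢ` iff there are
`x ∈ ℝ^S` and `z ≥ 0` with `A x ≥ T z` and `x(s_in) < λᵀ z`. -/

theorem forall_disj_reach_certificates_strict {S A : Type} [Fintype S] [Fintype A]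
    [DecidableEq S] (M : MDP S A) (F : Finset S)
    (habs : ∀ s ∈ F, ∀ a, M.enabled s a → M.prob s a s = 1)
    (hform : ∀ s, ∃ σ : MDP.Scheduler M, 0 < MDP.prReachFrom M σ F s)
    (hinit : M.init ∉ F)
    {k : ℕ} (G : Fin k → Finset S) (hG : ∀ i, G i ⊆ F) (lam : Fin k → ℝ) :
    (∀ σ : MDP.Scheduler M, ∃ i, MDP.prReach M σ (G i) < lam i) ↔
      ∃ (x : S → ℝ) (z : Fin k → ℝ),
        (∀ i, 0 ≤ z i) ∧
        (∀ p : S × A, p.1 ∉ F → M.enabled p.1 p.2 →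
          ∑ i, (∑ t ∈ G i, M.prob p.1 p.2 t) * z i ≤
            ∑ s ∈ Fᶜ, ((if p.1 = s then (1 : ℝ) else 0) - M.prob p.1 p.2 s) * x s) ∧
        x M.init < ∑ i, lam i * z i := by
  classical
  constructor
  · intro hLHS
    by_contra hno
    -- set up the Farkas data
    set g : ((S × A) ⊕ Fin k) → (S ⊕ Fin k) → ℝ := fun r j =>
      match r, j with
      | Sum.inl p, Sum.inl s' =>
          if p.1 ∉ F ∧ M.enabled p.1 p.2 then
            (if s' ∈ F then 0 else (if p.1 = s' then 1 else 0) - M.prob p.1 p.2 s')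
          else 0
      | Sum.inl p, Sum.inr i =>
          if p.1 ∉ F ∧ M.enabled p.1 p.2 then -(∑ t ∈ G i, M.prob p.1 p.2 t) else 0
      | Sum.inr _, Sum.inl _ => 0
      | Sum.inr i, Sum.inr i' => if i = i' then 1 else 0
      with hgdef
    set b : (S ⊕ Fin k) → ℝ := fun j =>
      match j with
      | Sum.inl s' => if s' = M.init then 1 else 0
      | Sum.inr i => -(lam i)
      with hbdef
    rcases MDPFarkas.farkas g b with ⟨c, hc, hsum⟩ | ⟨u, hu, hbu⟩
    · -- dual solution: build the flow y and a good scheduler, contradicting hLHS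
      set y : S × A → ℝ := fun p =>
        if p.1 ∉ F ∧ M.enabled p.1 p.2 then c (Sum.inl p) else 0 with hydef
      have hy0 : ∀ p, 0 ≤ y p := by
        intro p
        simp only [hydef]
        split
        · exact hc (Sum.inl p)
        · exact le_refl 0
      have hysupp : ∀ p : S × A, y p ≠ 0 → p.1 ∉ F ∧ M.enabled p.1 p.2 := by
        intro p hp
        by_contra hcon
        rw [hydef] at hp
        simp only [if_neg hcon] at hp
        exact hp rfl
      have hflow : ∀ s', s' ∉ F →
          ∑ p : S × A, y p * ((if p.1 = s' then (1:ℝ) else 0) - M.prob p.1 p.2 s')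
            = (if s' = M.init then 1 else 0) := by
        intro s' hs'
        have h1 := hsum (Sum.inl s')
        rw [Fintype.sum_sum_type] at h1
        have h2 : ∀ i : Fin k, c (Sum.inr i) * g (Sum.inr i) (Sum.inl s') = 0 := by
          intro i
          have : g (Sum.inr i) (Sum.inl s') = 0 := rfl
          rw [this, mul_zero]
        rw [Finset.sum_congr rfl (fun i (_ : i ∈ Finset.univ) => h2 i),
          Finset.sum_const_zero, add_zero] at h1
        have h3 : ∀ p : S × A, c (Sum.inl p) * g (Sum.inl p) (Sum.inl s')
            = y p * ((if p.1 = s' then (1:ℝ) else 0) - M.prob p.1 p.2 s') := by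
          intro p
          have hge : g (Sum.inl p) (Sum.inl s')
              = if p.1 ∉ F ∧ M.enabled p.1 p.2 then
                  (if s' ∈ F then 0 else (if p.1 = s' then 1 else 0) - M.prob p.1 p.2 s')
                else 0 := rfl
          rw [hge]
          simp only [hydef]
          by_cases hact : p.1 ∉ F ∧ M.enabled p.1 p.2
          · rw [if_pos hact, if_pos hact, if_neg hs']
          · rw [if_neg hact, if_neg hact, mul_zero, zero_mul]
        rw [Finset.sum_congr rfl (fun p (_ : p ∈ Finset.univ) => h3 p)] at h1
        exact h1
      have hT : ∀ i, lam i ≤ ∑ p : S × A, y p * ∑ t ∈ G i, M.prob p.1 p.2 t := by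
        intro i
        have h1 := hsum (Sum.inr i)
        rw [Fintype.sum_sum_type] at h1
        have h2 : ∀ p : S × A, c (Sum.inl p) * g (Sum.inl p) (Sum.inr i)
            = -(y p * ∑ t ∈ G i, M.prob p.1 p.2 t) := by
          intro p
          have hge : g (Sum.inl p) (Sum.inr i)
              = if p.1 ∉ F ∧ M.enabled p.1 p.2 then
                  -(∑ t ∈ G i, M.prob p.1 p.2 t) else 0 := rfl
          rw [hge]
          simp only [hydef]
          by_cases hact : p.1 ∉ F ∧ M.enabled p.1 p.2
          · rw [if_pos hact, if_pos hact]; ring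
          · rw [if_neg hact, if_neg hact]; ring
        have h3 : ∀ i' : Fin k, c (Sum.inr i') * g (Sum.inr i') (Sum.inr i)
            = c (Sum.inr i') * (if i' = i then 1 else 0) := fun i' => rfl
        rw [Finset.sum_congr rfl (fun p (_ : p ∈ Finset.univ) => h2 p),
          Finset.sum_congr rfl (fun i' (_ : i' ∈ Finset.univ) => h3 i')] at h1
        have h4 : ∑ i' : Fin k, c (Sum.inr i') * (if i' = i then (1:ℝ) else 0)
            = c (Sum.inr i) := by
          rw [Finset.sum_congr rfl (fun i' (_ : i' ∈ Finset.univ) => by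
            rw [mul_ite, mul_one, mul_zero]),
            Finset.sum_ite_eq' Finset.univ i (fun i' => c (Sum.inr i'))]
          simp
        rw [h4, Finset.sum_neg_distrib] at h1
        have hb1 : b (Sum.inr i) = -(lam i) := rfl
        rw [hb1] at h1
        have hci := hc (Sum.inr i)
        linarith
      obtain ⟨σ, hσ⟩ := MDPFarkas.completeness_aux M F habs hinit G hG lam y hy0 hysupp
        (fun s' hs' => hflow s' hs') hT
      obtain ⟨i, hi⟩ := hLHS σ
      linarith [hσ i]
    · -- primal solution: this is exactly a certificate, contradicting hno
      apply hno
      refine ⟨fun s => u (Sum.inl s), fun i => u (Sum.inr i), ?_, ?_, ?_⟩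
      · intro i
        have h1 := hu (Sum.inr i)
        rw [Fintype.sum_sum_type] at h1
        have h2 : ∀ s : S, g (Sum.inr i) (Sum.inl s) * u (Sum.inl s) = 0 := fun s => by
          have : g (Sum.inr i) (Sum.inl s) = 0 := rfl
          rw [this, zero_mul]
        have h3 : ∑ i' : Fin k, g (Sum.inr i) (Sum.inr i') * u (Sum.inr i')
            = u (Sum.inr i) := by
          have h5 : ∀ i' : Fin k, g (Sum.inr i) (Sum.inr i') * u (Sum.inr i')
              = if i = i' then u (Sum.inr i') else 0 := by
            intro i'
            have : g (Sum.inr i) (Sum.inr i') = if i = i' then 1 else 0 := rfl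
            rw [this, ite_mul, one_mul, zero_mul]
          rw [Finset.sum_congr rfl (fun i' (_ : i' ∈ Finset.univ) => h5 i'),
            Finset.sum_ite_eq Finset.univ i (fun i' => u (Sum.inr i'))]
          simp
        rw [Finset.sum_congr rfl (fun s (_ : s ∈ Finset.univ) => h2 s),
          Finset.sum_const_zero, zero_add, h3] at h1
        exact h1
      · intro p hp hen
        have h1 := hu (Sum.inl p)
        rw [Fintype.sum_sum_type] at h1
        have hact : p.1 ∉ F ∧ M.enabled p.1 p.2 := ⟨hp, hen⟩
        have h2 : ∑ s : S, g (Sum.inl p) (Sum.inl s) * u (Sum.inl s)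
            = ∑ s ∈ Fᶜ, ((if p.1 = s then (1:ℝ) else 0) - M.prob p.1 p.2 s) * u (Sum.inl s) := by
          have h5 : ∀ s : S, g (Sum.inl p) (Sum.inl s) * u (Sum.inl s)
              = if s ∈ F then 0 else
                  ((if p.1 = s then (1:ℝ) else 0) - M.prob p.1 p.2 s) * u (Sum.inl s) := by
            intro s
            have hge : g (Sum.inl p) (Sum.inl s)
                = if p.1 ∉ F ∧ M.enabled p.1 p.2 then
                    (if s ∈ F then 0 else (if p.1 = s then 1 else 0) - M.prob p.1 p.2 s)
                  else 0 := rfl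
            rw [hge, if_pos hact, ite_mul, zero_mul]
          rw [Finset.sum_congr rfl (fun s (_ : s ∈ Finset.univ) => h5 s),
            MDPFarkas.sum_ite_compl F]
        have h3 : ∑ i : Fin k, g (Sum.inl p) (Sum.inr i) * u (Sum.inr i)
            = -∑ i, (∑ t ∈ G i, M.prob p.1 p.2 t) * u (Sum.inr i) := by
          have h5 : ∀ i : Fin k, g (Sum.inl p) (Sum.inr i) * u (Sum.inr i)
              = -((∑ t ∈ G i, M.prob p.1 p.2 t) * u (Sum.inr i)) := by
            intro i
            have hge : g (Sum.inl p) (Sum.inr i)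
                = if p.1 ∉ F ∧ M.enabled p.1 p.2 then
                    -(∑ t ∈ G i, M.prob p.1 p.2 t) else 0 := rfl
            rw [hge, if_pos hact]; ring
          rw [Finset.sum_congr rfl (fun i (_ : i ∈ Finset.univ) => h5 i),
            Finset.sum_neg_distrib]
        rw [h2, h3] at h1
        linarith
      · rw [Fintype.sum_sum_type] at hbu
        have h2 : ∑ s : S, b (Sum.inl s) * u (Sum.inl s) = u (Sum.inl M.init) := by
          have h5 : ∀ s : S, b (Sum.inl s) * u (Sum.inl s)
              = if s = M.init then u (Sum.inl s) else 0 := by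
            intro s
            have : b (Sum.inl s) = if s = M.init then 1 else 0 := rfl
            rw [this, ite_mul, one_mul, zero_mul]
          rw [Finset.sum_congr rfl (fun s (_ : s ∈ Finset.univ) => h5 s),
            Finset.sum_ite_eq' Finset.univ M.init (fun s => u (Sum.inl s))]
          simp
        have h3 : ∑ i : Fin k, b (Sum.inr i) * u (Sum.inr i)
            = -∑ i, lam i * u (Sum.inr i) := by
          have h5 : ∀ i : Fin k, b (Sum.inr i) * u (Sum.inr i)
              = -(lam i * u (Sum.inr i)) := by
            intro i
            have : b (Sum.inr i) = -(lam i) := rfl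
            rw [this]; ring
          rw [Finset.sum_congr rfl (fun i (_ : i ∈ Finset.univ) => h5 i),
            Finset.sum_neg_distrib]
        rw [h2, h3] at hbu
        linarith
  · rintro ⟨x, z, hz, hcons, hlt⟩
    exact MDPFarkas.soundness M F habs hform hinit G hG lam x z hz hcons hlt
end

section
/- Let M be an MDP in reachability form with matrices A and T as above, δ_in Dirac, λ ∈ ℝ^k. Then every scheduler σ satisfies ⋁_{i=1}^k Pr^σ(◇G_i) ≤ λ_i if and only if there exist x ∈ ℝ^S and z ∈ ℝ^k with z ≥ 0, z ≠ 0, A x ≥ T z, and x(s_in) ≤ λᵀ z. -/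
open Finset

section Farkas

variable {E : Type*} [NormedAddCommGroup E] [InnerProductSpace ℝ E] [FiniteDimensional ℝ E]

/-- the conic hull of finitely many vectors is closed. -/
theorem isClosed_finite_cone {ι : Type*} [Fintype ι] [DecidableEq ι] (t : Finset ι) (a : ι → E) :
    IsClosed {x : E | ∃ μ : ι → ℝ, (∀ j, 0 ≤ μ j) ∧ x = ∑ j ∈ t, μ j • a j} := by
  classical
  induction t using Finset.strongInduction with
  | _ t IH =>
  by_cases hli : LinearIndependent ℝ (fun j : {x // x ∈ t} => a j)
  · -- linearly independent case: image of the nonnegative orthant under a closed embedding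
    let L : ({x // x ∈ t} → ℝ) →ₗ[ℝ] E :=
      { toFun := fun μ => ∑ j : {x // x ∈ t}, μ j • a j
        map_add' := by
          intro μ ν; simp [add_smul, Finset.sum_add_distrib]
        map_smul' := by
          intro c μ; simp [smul_smul, Finset.smul_sum] }
    have hLinj : Function.Injective L := by
      rw [← LinearMap.ker_eq_bot, LinearMap.ker_eq_bot']
      intro μ hμ
      have := (Fintype.linearIndependent_iff.mp hli) μ hμ
      funext j; exact this j
    have hemb := L.isClosedEmbedding_of_injective (by rwa [LinearMap.ker_eq_bot])
    have hset : {x : E | ∃ μ : ι → ℝ, (∀ j, 0 ≤ μ j) ∧ x = ∑ j ∈ t, μ j • a j} =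
        L '' {μ : {x // x ∈ t} → ℝ | ∀ j, 0 ≤ μ j} := by
      ext x
      constructor
      · rintro ⟨μ, hμ, rfl⟩
        refine ⟨fun j => μ j, fun j => hμ j, ?_⟩
        show ∑ j : {x // x ∈ t}, μ j • a j = _
        exact (Finset.sum_attach t (fun j => μ j • a j)).symm ▸ rfl
      · rintro ⟨ν, hν, rfl⟩
        refine ⟨fun j => if h : j ∈ t then ν ⟨j, h⟩ else 0, fun j => ?_, ?_⟩
        · by_cases h : j ∈ t <;> simp [h, hν _]
        · show _ = ∑ j ∈ t, (if h : j ∈ t then ν ⟨j, h⟩ else 0) • a j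
          rw [← Finset.sum_attach t (fun j => (if h : j ∈ t then ν ⟨j, h⟩ else 0) • a j)]
          exact Finset.sum_congr rfl (fun j _ => by simp [j.2])
    rw [hset]
    refine hemb.isClosedMap _ ?_
    have : {μ : {x // x ∈ t} → ℝ | ∀ j, 0 ≤ μ j} = ⋂ j, {μ | 0 ≤ μ j} := by
      ext μ; simp [Set.mem_iInter]
    rw [this]
    exact isClosed_iInter fun j => isClosed_le continuous_const (continuous_apply j)
  · -- dependent case: the cone is a finite union of cones on smaller sets
    obtain ⟨g, hg0, j₀, hj₀⟩ := Fintype.not_linearIndependent_iff.mp hli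
    -- wlog there is a coordinate with positive coefficient
    obtain ⟨g, hg0, j₀, hj₀⟩ :
        ∃ g : {x // x ∈ t} → ℝ, ∑ j, g j • a j = 0 ∧ ∃ j₀, 0 < g j₀ := by
      rcases hj₀.lt_or_gt with h | h
      · exact ⟨-g, by simpa using hg0, j₀, by simpa using h⟩
      · exact ⟨g, hg0, j₀, h⟩
    have key : {x : E | ∃ μ : ι → ℝ, (∀ j, 0 ≤ μ j) ∧ x = ∑ j ∈ t, μ j • a j} =
        ⋃ j ∈ Finset.filter (fun j : {x // x ∈ t} => 0 < g j) Finset.univ,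
          {x : E | ∃ μ : ι → ℝ, (∀ j, 0 ≤ μ j) ∧ x = ∑ i ∈ t.erase j.1, μ i • a i} := by
      have hsum : ∀ (ν : ι → ℝ), ∑ j ∈ t, ν j • a j = ∑ j ∈ t.attach, ν j.1 • a j.1 :=
        fun ν => (Finset.sum_attach t (fun j => ν j • a j)).symm
      ext x
      simp only [Set.mem_iUnion, Set.mem_setOf_eq, exists_prop]
      constructor
      · rintro ⟨μ, hμ, rfl⟩
        set s := Finset.filter (fun j : {x // x ∈ t} => 0 < g j) Finset.univ with hs
        obtain ⟨js, hjs, hmin⟩ := s.exists_min_image (fun j => μ j.1 / g j)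
          ⟨j₀, by simp [hs, hj₀]⟩
        have hgjs : 0 < g js := (Finset.mem_filter.mp hjs).2
        set T := μ js.1 / g js with hT
        have hT0 : 0 ≤ T := div_nonneg (hμ _) hgjs.le
        set ν : ι → ℝ := fun j => if h : j ∈ t then μ j - T * g ⟨j, h⟩ else 0 with hν
        have hν0 : ∀ j, 0 ≤ ν j := by
          intro j
          by_cases h : j ∈ t
          · simp only [hν, dif_pos h]
            rcases le_or_gt (g ⟨j, h⟩) 0 with hg | hg
            · have : T * g ⟨j, h⟩ ≤ 0 := mul_nonpos_of_nonneg_of_nonpos hT0 hg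
              linarith [hμ j]
            · have hTle : T ≤ μ j / g ⟨j, h⟩ := hmin ⟨j, h⟩ (by simp [hs, hg])
              rw [le_div_iff₀ hg] at hTle
              linarith
          · simp [hν, dif_neg h]
        refine ⟨js, hjs, ν, hν0, ?_⟩
        have hνjs : ν js.1 = 0 := by
          simp only [hν, dif_pos js.2, Subtype.coe_eta, hT]
          rw [div_mul_cancel₀ _ (ne_of_gt hgjs)]
          ring
        rw [Finset.sum_erase t (by rw [hνjs, zero_smul])]
        rw [hsum ν, hsum μ]
        have : ∀ j ∈ t.attach, ν j.1 • a j.1 = μ j.1 • a j.1 - (T * g j) • a j.1 := by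
          intro j _
          simp only [hν, dif_pos j.2, Subtype.coe_eta, sub_smul]
        rw [Finset.sum_congr rfl this, Finset.sum_sub_distrib]
        have : ∑ j ∈ t.attach, (T * g j) • a j.1 = T • ∑ j ∈ t.attach, g j • a j.1 := by
          rw [Finset.smul_sum]
          exact Finset.sum_congr rfl (fun j _ => by rw [smul_smul])
        rw [this]
        have h0 : ∑ j ∈ t.attach, g j • a j.1 = 0 := by
          rw [← hg0]; exact Finset.sum_congr rfl (fun j _ => rfl)
        rw [h0, smul_zero, sub_zero]
      · rintro ⟨j, hj, μ, hμ, rfl⟩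
        classical
        refine ⟨fun i => if i = j.1 then 0 else μ i, fun i => ?_, ?_⟩
        · dsimp only; split <;> [rfl; exact hμ i]
        · rw [← Finset.sum_erase t (f := fun i => (if i = j.1 then 0 else μ i) • a i)
            (a := j.1) (by simp)]
          exact (Finset.sum_congr rfl (fun i hi => by
            rw [if_neg (Finset.ne_of_mem_erase hi)])).symm
    rw [key]
    refine Set.Finite.isClosed_biUnion (Finset.finite_toSet _) (fun j hj => ?_)
    exact IH (t.erase j.1) (Finset.erase_ssubset j.2)

end Farkas

section Farkas2

open scoped InnerProductSpace

/-- Farkas lemma, solvability form. -/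
theorem farkas_solvability {R : Type*} [Fintype R] [DecidableEq R] {J : Type*} [Fintype J]
    [DecidableEq J] (aJ : J → EuclideanSpace ℝ R) (c : EuclideanSpace ℝ R)
    (h : ¬ ∃ μ : J → ℝ, (∀ j, 0 ≤ μ j) ∧ ∑ j, μ j • aJ j = c) :
    ∃ y : EuclideanSpace ℝ R, (∀ j, 0 ≤ ⟪aJ j, y⟫_ℝ) ∧ ⟪y, c⟫_ℝ < 0 := by
  classical
  set Kc : Set (EuclideanSpace ℝ R) :=
    {x | ∃ μ : J → ℝ, (∀ j, 0 ≤ μ j) ∧ x = ∑ j ∈ Finset.univ, μ j • aJ j} with hKc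
  have hKclosed : IsClosed Kc := isClosed_finite_cone Finset.univ aJ
  set K : ConvexCone ℝ (EuclideanSpace ℝ R) :=
    { carrier := Kc
      smul_mem' := by
        rintro d hd x ⟨μ, hμ, rfl⟩
        exact ⟨fun j => d * μ j, fun j => mul_nonneg hd.le (hμ j), by
          rw [Finset.smul_sum]; exact Finset.sum_congr rfl fun j _ => by
            simp [smul_smul]⟩
      add_mem' := by
        rintro x ⟨μ, hμ, rfl⟩ y ⟨ν, hν, rfl⟩
        exact ⟨fun j => μ j + ν j, fun j => add_nonneg (hμ j) (hν j), by
          rw [← Finset.sum_add_distrib]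
          exact Finset.sum_congr rfl fun j _ => by simp [add_smul]⟩ } with hK
  have hne : (K : Set (EuclideanSpace ℝ R)).Nonempty :=
    ⟨0, ⟨0, fun j => le_rfl, by simp⟩⟩
  have hcnm : c ∉ K := by
    intro hc
    obtain ⟨μ, hμ, hμeq⟩ := hc
    exact h ⟨μ, hμ, hμeq.symm⟩
  obtain ⟨y, hy1, hy2⟩ :=
    (by
      obtain ⟨y, hy1, hy2⟩ := ProperCone.hyperplane_separation' (x₀ := c)
        ({ carrier := Kc
           add_mem' := fun hx hy => K.add_mem' hx hy
           zero_mem' := ⟨0, fun j => le_rfl, by simp⟩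
           smul_mem' := fun d x hx => by
             rcases hx with ⟨μ, hμ, rfl⟩
             exact ⟨fun j => (d : ℝ) * μ j, fun j => mul_nonneg d.2 (hμ j), by
               show (d : ℝ) • (∑ j, μ j • aJ j : EuclideanSpace ℝ R) = _
               rw [Finset.smul_sum]
               exact Finset.sum_congr rfl fun j _ => by simp [smul_smul]⟩
           isClosed' := hKclosed } : ProperCone ℝ (EuclideanSpace ℝ R)) (fun hc => hcnm hc)
      exact ⟨y, hy1, by rw [real_inner_comm]; exact hy2⟩ :
      ∃ y : EuclideanSpace ℝ R, (∀ x ∈ K, 0 ≤ ⟪x, y⟫_ℝ) ∧ ⟪y, c⟫_ℝ < 0)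
  refine ⟨y, fun j => ?_, hy2⟩
  refine hy1 (aJ j) ⟨fun i => if i = j then 1 else 0, fun i => by positivity, ?_⟩
  simp

/-- Farkas lemma, infeasibility form: if `M w ≥ b` has no solution, there is `y ≥ 0`
with `yᵀ M = 0` and `yᵀ b > 0`. -/
theorem farkas_infeasible {R V : Type*} [Fintype R] [DecidableEq R] [Fintype V] [DecidableEq V]
    (M : R → V → ℝ) (b : R → ℝ)
    (h : ¬ ∃ w : V → ℝ, ∀ r, b r ≤ ∑ v, M r v * w v) :
    ∃ y : R → ℝ, (∀ r, 0 ≤ y r) ∧ (∀ v, ∑ r, y r * M r v = 0) ∧ 0 < ∑ r, y r * b r := by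
  classical
  set aJ : (V ⊕ V ⊕ R) → EuclideanSpace ℝ R := fun j =>
    match j with
    | Sum.inl v => WithLp.toLp 2 (fun r => M r v : R → ℝ)
    | Sum.inr (Sum.inl v) => WithLp.toLp 2 (fun r => -(M r v) : R → ℝ)
    | Sum.inr (Sum.inr r') => WithLp.toLp 2 (fun r => -(if r = r' then 1 else 0) : R → ℝ) with haJ
  have hnosol : ¬ ∃ μ : (V ⊕ V ⊕ R) → ℝ, (∀ j, 0 ≤ μ j) ∧
      ∑ j, μ j • aJ j = WithLp.toLp 2 b := by
    rintro ⟨μ, hμ, hμeq⟩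
    refine h ⟨fun v => μ (Sum.inl v) - μ (Sum.inr (Sum.inl v)), fun r => ?_⟩
    have hr := congrFun (congrArg WithLp.ofLp hμeq) r
    rw [WithLp.ofLp_sum, Finset.sum_apply] at hr
    simp only [PiLp.smul_apply, smul_eq_mul, Fintype.sum_sum_type, haJ] at hr
    have hδ : ∑ r' : R, μ (Sum.inr (Sum.inr r')) * -(if r = r' then (1:ℝ) else 0)
        = -(μ (Sum.inr (Sum.inr r))) := by
      rw [show (∑ r' : R, μ (Sum.inr (Sum.inr r')) * -(if r = r' then (1:ℝ) else 0))
          = ∑ r' : R, -(if r = r' then μ (Sum.inr (Sum.inr r')) else 0) from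
        Finset.sum_congr rfl (fun r' _ => by split <;> simp)]
      rw [Finset.sum_neg_distrib, neg_inj, Finset.sum_ite_eq]
      simp
    rw [hδ] at hr
    have hsplit : ∑ v, M r v * (μ (Sum.inl v) - μ (Sum.inr (Sum.inl v)))
        = ∑ v, μ (Sum.inl v) * M r v - ∑ v, μ (Sum.inr (Sum.inl v)) * M r v := by
      rw [← Finset.sum_sub_distrib]; exact Finset.sum_congr rfl fun v _ => by ring
    have hneg : ∑ v, μ (Sum.inr (Sum.inl v)) * -(M r v)
        = -∑ v, μ (Sum.inr (Sum.inl v)) * M r v := by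
      simp [mul_neg, Finset.sum_neg_distrib]
    rw [hneg] at hr
    rw [hsplit]
    linarith [hμ (Sum.inr (Sum.inr r))]
  obtain ⟨y, hy1, hy2⟩ := farkas_solvability aJ (WithLp.toLp 2 b) hnosol
  have hinner : ∀ (x w : EuclideanSpace ℝ R), ⟪x, w⟫_ℝ = ∑ r, x r * w r := by
    intro x w
    simp [PiLp.inner_apply, RCLike.inner_apply, conj_trivial]
    exact Finset.sum_congr rfl fun _ _ => mul_comm _ _
  refine ⟨fun r => -(y r), fun r => ?_, fun v => ?_, ?_⟩
  · have := hy1 (Sum.inr (Sum.inr r))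
    rw [hinner] at this
    have hval : ∑ r' : R, aJ (Sum.inr (Sum.inr r)) r' * y r' = -(y r) := by
      rw [show (∑ r' : R, aJ (Sum.inr (Sum.inr r)) r' * y r')
          = ∑ r' : R, -(if r' = r then y r' else 0) from
        Finset.sum_congr rfl (fun r' _ => by simp only [haJ, PiLp.toLp_apply]; split <;> simp)]
      rw [Finset.sum_neg_distrib, neg_inj, Finset.sum_ite_eq']
      simp
    rw [hval] at this
    simpa using this
  · have h1 := hy1 (Sum.inl v)
    have h2 := hy1 (Sum.inr (Sum.inl v))
    rw [hinner] at h1 h2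
    have hval2 : ∑ r : R, aJ (Sum.inr (Sum.inl v)) r * y r = -∑ r : R, aJ (Sum.inl v) r * y r := by
      simp only [haJ, PiLp.toLp_apply, ← Finset.sum_neg_distrib]
      exact Finset.sum_congr rfl fun r _ => by ring
    rw [hval2] at h2
    have h0 : ∑ r : R, aJ (Sum.inl v) r * y r = 0 := le_antisymm (by linarith) h1
    rw [← neg_eq_zero, ← Finset.sum_neg_distrib] at h0
    rw [← h0]
    exact Finset.sum_congr rfl fun r _ => by simp only [haJ, PiLp.toLp_apply]; ring
  · rw [hinner] at hy2
    have hb : ∑ r, (fun r => -(y r)) r * b r = -∑ r, y r * b r := by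
      simp [neg_mul, Finset.sum_neg_distrib]
    rw [hb]
    linarith

end Farkas2


namespace MDPAux

open MDP Filter Topology

set_option linter.unusedSectionVars false

variable {S A : Type} [Fintype S] [Fintype A] [DecidableEq S]

theorem prob_nonneg (M : MDP S A) (s : S) (a : A) (t : S) : 0 ≤ M.prob s a t := by
  unfold MDP.prob
  cases h : M.trans s a with
  | none => simp
  | some f => simpa using M.nonneg' s a f h t

theorem prob_sum_eq_one (M : MDP S A) {s : S} {a : A} (h : M.enabled s a) :
    ∑ t, M.prob s a t = 1 := by
  unfold MDP.enabled at h
  rw [Option.isSome_iff_exists] at h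
  obtain ⟨f, hf⟩ := h
  unfold MDP.prob
  rw [hf]
  simpa using M.sum_one' s a f hf

theorem prob_eq_zero_of_not_enabled (M : MDP S A) {s : S} {a : A} (h : ¬ M.enabled s a) (t : S) :
    M.prob s a t = 0 := by
  unfold MDP.enabled at h
  rw [Option.not_isSome_iff_eq_none] at h
  unfold MDP.prob
  rw [h]
  simp

theorem prob_sum_le_one (M : MDP S A) (s : S) (a : A) : ∑ t, M.prob s a t ≤ 1 := by
  by_cases h : M.enabled s a
  · exact le_of_eq (prob_sum_eq_one M h)
  · simp [prob_eq_zero_of_not_enabled M h]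

theorem reachAux_zero (M : MDP S A) (σ : Scheduler M) (G : Finset S) (h : List (S × A)) (s : S) :
    reachAux M σ G 0 h s = if s ∈ G then 1 else 0 := rfl

theorem reachAux_succ (M : MDP S A) (σ : Scheduler M) (G : Finset S) (n : ℕ) (h : List (S × A))
    (s : S) : reachAux M σ G (n + 1) h s = if s ∈ G then 1 else
      ∑ a : A, σ.choice h s a * ∑ t : S, M.prob s a t * reachAux M σ G n (h ++ [(s, a)]) t := rfl

theorem reachAux_nonneg (M : MDP S A) (σ : Scheduler M) (G : Finset S) (n : ℕ) :
    ∀ (h : List (S × A)) (s : S), 0 ≤ reachAux M σ G n h s := by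
  induction n with
  | zero => intro h s; rw [reachAux_zero]; positivity
  | succ n IH =>
    intro h s
    rw [reachAux_succ]
    split
    · norm_num
    · refine Finset.sum_nonneg fun a _ => mul_nonneg (σ.choice_nonneg h s a) ?_
      exact Finset.sum_nonneg fun t _ => mul_nonneg (prob_nonneg M s a t) (IH _ t)

theorem reachAux_le_one (M : MDP S A) (σ : Scheduler M) (G : Finset S) (n : ℕ) :
    ∀ (h : List (S × A)) (s : S), reachAux M σ G n h s ≤ 1 := by
  induction n with
  | zero => intro h s; rw [reachAux_zero]; split <;> norm_num
  | succ n IH =>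
    intro h s
    rw [reachAux_succ]
    split
    · exact le_refl 1
    · calc ∑ a : A, σ.choice h s a * ∑ t : S, M.prob s a t * reachAux M σ G n (h ++ [(s, a)]) t
          ≤ ∑ a : A, σ.choice h s a * 1 := by
            refine Finset.sum_le_sum fun a _ => ?_
            by_cases hσ : σ.choice h s a = 0
            · simp [hσ]
            · refine mul_le_mul_of_nonneg_left ?_ (σ.choice_nonneg h s a)
              calc ∑ t : S, M.prob s a t * reachAux M σ G n (h ++ [(s, a)]) t
                  ≤ ∑ t : S, M.prob s a t * 1 :=
                    Finset.sum_le_sum fun t _ =>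
                      mul_le_mul_of_nonneg_left (IH _ t) (prob_nonneg M s a t)
                _ ≤ 1 := by simpa using prob_sum_le_one M s a
        _ = 1 := by simpa using σ.choice_sum_one h s

theorem reachAux_mono (M : MDP S A) (σ : Scheduler M) (G : Finset S) (n : ℕ) :
    ∀ (h : List (S × A)) (s : S), reachAux M σ G n h s ≤ reachAux M σ G (n + 1) h s := by
  induction n with
  | zero =>
    intro h s
    rw [reachAux_zero, reachAux_succ]
    split
    · exact le_refl 1
    · exact Finset.sum_nonneg fun a _ => mul_nonneg (σ.choice_nonneg h s a)
        (Finset.sum_nonneg fun t _ => mul_nonneg (prob_nonneg M s a t)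
          (reachAux_nonneg M σ G 0 _ t))
  | succ n IH =>
    intro h s
    rw [reachAux_succ, reachAux_succ]
    split
    · exact le_refl 1
    · refine Finset.sum_le_sum fun a _ => mul_le_mul_of_nonneg_left ?_ (σ.choice_nonneg h s a)
      exact Finset.sum_le_sum fun t _ =>
        mul_le_mul_of_nonneg_left (IH _ t) (prob_nonneg M s a t)

theorem reachAux_monotone (M : MDP S A) (σ : Scheduler M) (G : Finset S) (h : List (S × A))
    (s : S) : Monotone (fun n => reachAux M σ G n h s) :=
  monotone_nat_of_le_succ fun n => reachAux_mono M σ G n h s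

theorem tendsto_reachAux (M : MDP S A) (σ : Scheduler M) (G : Finset S) (s : S) :
    Tendsto (fun n => reachAux M σ G n [] s) atTop (𝓝 (prReachFrom M σ G s)) :=
  tendsto_atTop_ciSup (reachAux_monotone M σ G [] s)
    ⟨1, by rintro x ⟨n, rfl⟩; exact reachAux_le_one M σ G n [] s⟩

theorem reachAux_of_mem (M : MDP S A) (σ : Scheduler M) {G : Finset S} {s : S} (hs : s ∈ G)
    (n : ℕ) (h : List (S × A)) : reachAux M σ G n h s = 1 := by
  cases n <;> simp [reachAux_zero, reachAux_succ, hs]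

theorem prReachFrom_of_mem (M : MDP S A) (σ : Scheduler M) {G : Finset S} {s : S} (hs : s ∈ G) :
    prReachFrom M σ G s = 1 := by
  unfold prReachFrom
  simp [reachAux_of_mem M σ hs]

theorem reachAux_absorb (M : MDP S A) {F : Finset S}
    (habs : ∀ s ∈ F, ∀ a, M.enabled s a → M.prob s a s = 1)
    (σ : Scheduler M) {G : Finset S} {s : S} (hsF : s ∈ F) (hsG : s ∉ G) (n : ℕ) :
    ∀ (h : List (S × A)), reachAux M σ G n h s = 0 := by
  induction n with
  | zero => intro h; simp [reachAux_zero, hsG]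
  | succ n IH =>
    intro h
    rw [reachAux_succ, if_neg hsG]
    refine Finset.sum_eq_zero fun a _ => ?_
    by_cases hσ : σ.choice h s a = 0
    · rw [hσ, zero_mul]
    · have hen := σ.choice_support h s a hσ
      have h1 := habs s hsF a hen
      have hsum := prob_sum_eq_one M hen
      have herase : ∑ t ∈ Finset.univ.erase s, M.prob s a t = 0 := by
        rw [← Finset.add_sum_erase _ _ (Finset.mem_univ s)] at hsum
        linarith
      have hz : ∀ t ∈ Finset.univ.erase s, M.prob s a t = 0 := by
        rw [Finset.sum_eq_zero_iff_of_nonneg (fun t _ => prob_nonneg M s a t)] at herase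
        exact herase
      have : ∑ t : S, M.prob s a t * reachAux M σ G n (h ++ [(s, a)]) t = 0 := by
        refine Finset.sum_eq_zero fun t _ => ?_
        by_cases ht : t = s
        · rw [ht, IH _, mul_zero]
        · rw [hz t (Finset.mem_erase.mpr ⟨ht, Finset.mem_univ t⟩), zero_mul]
      rw [this, mul_zero]

theorem prReachFrom_absorb (M : MDP S A) {F : Finset S}
    (habs : ∀ s ∈ F, ∀ a, M.enabled s a → M.prob s a s = 1)
    (σ : Scheduler M) {G : Finset S} {s : S} (hsF : s ∈ F) (hsG : s ∉ G) :
    prReachFrom M σ G s = 0 := by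
  unfold prReachFrom
  simp [reachAux_absorb M habs σ hsF hsG]

theorem reachAux_hist (M : MDP S A) (σ : Scheduler M)
    (hm : ∀ (h : List (S × A)) (s : S) (a : A), σ.choice h s a = σ.choice [] s a)
    (G : Finset S) (n : ℕ) :
    ∀ (h h' : List (S × A)) (s : S), reachAux M σ G n h s = reachAux M σ G n h' s := by
  induction n with
  | zero => intro h h' s; rw [reachAux_zero, reachAux_zero]
  | succ n IH =>
    intro h h' s
    rw [reachAux_succ, reachAux_succ]
    split
    · rfl
    · refine Finset.sum_congr rfl fun a _ => ?_
      rw [hm h s a, hm h' s a]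
      congr 1
      exact Finset.sum_congr rfl fun t _ => by rw [IH (h ++ [(s, a)]) (h' ++ [(s, a)]) t]

theorem prReachFrom_bellman (M : MDP S A) (σ : Scheduler M)
    (hm : ∀ (h : List (S × A)) (s : S) (a : A), σ.choice h s a = σ.choice [] s a)
    (G : Finset S) {s : S} (hs : s ∉ G) :
    prReachFrom M σ G s =
      ∑ a : A, σ.choice [] s a * ∑ t : S, M.prob s a t * prReachFrom M σ G t := by
  have h1 : Tendsto (fun n => reachAux M σ G (n + 1) [] s) atTop (𝓝 (prReachFrom M σ G s)) :=
    (tendsto_reachAux M σ G s).comp (tendsto_add_atTop_nat 1)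
  have h2 : Tendsto
      (fun n => ∑ a : A, σ.choice [] s a * ∑ t : S, M.prob s a t * reachAux M σ G n [] t)
      atTop (𝓝 (∑ a : A, σ.choice [] s a * ∑ t : S, M.prob s a t * prReachFrom M σ G t)) := by
    refine tendsto_finset_sum _ fun a _ => Tendsto.const_mul _ ?_
    exact tendsto_finset_sum _ fun t _ => Tendsto.const_mul _ (tendsto_reachAux M σ G t)
  have heq : ∀ n, reachAux M σ G (n + 1) [] s
      = ∑ a : A, σ.choice [] s a * ∑ t : S, M.prob s a t * reachAux M σ G n [] t := by
    intro n
    rw [reachAux_succ, if_neg hs]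
    refine Finset.sum_congr rfl fun a _ => ?_
    congr 1
    exact Finset.sum_congr rfl fun t _ => by
      rw [reachAux_hist M σ hm G n ([] ++ [(s, a)]) [] t]
  rw [show (fun n => reachAux M σ G (n + 1) [] s)
      = (fun n => ∑ a : A, σ.choice [] s a * ∑ t : S, M.prob s a t * reachAux M σ G n [] t)
    from funext heq] at h1
  exact tendsto_nhds_unique h1 h2

open scoped Classical in
/-- a default (deterministic, memoryless) scheduler. -/
noncomputable def detSched (M : MDP S A) : Scheduler M where
  choice _ s a := if a = (M.exists_enabled s).choose then 1 else 0
  choice_nonneg h s a := by positivity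
  choice_sum_one h s := by simp
  choice_support h s a ha := by
    have : a = (M.exists_enabled s).choose := by
      by_contra hne
      exact ha (if_neg hne)
    rw [this]
    exact (M.exists_enabled s).choose_spec

open scoped Classical in
/-- states from which `F` is graph-reachable within `n` steps. -/
noncomputable def lvl (M : MDP S A) (F : Finset S) : ℕ → Finset S
  | 0 => F
  | n + 1 => lvl M F n ∪ Finset.univ.filter
      (fun s => ∃ a, M.enabled s a ∧ 0 < ∑ t ∈ lvl M F n, M.prob s a t)

theorem lvl_zero (M : MDP S A) (F : Finset S) : lvl M F 0 = F := rfl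

open scoped Classical in
theorem lvl_succ (M : MDP S A) (F : Finset S) (n : ℕ) : lvl M F (n + 1) = lvl M F n ∪
    Finset.univ.filter (fun s => ∃ a, M.enabled s a ∧ 0 < ∑ t ∈ lvl M F n, M.prob s a t) := rfl

theorem lvl_subset_succ (M : MDP S A) (F : Finset S) (n : ℕ) : lvl M F n ⊆ lvl M F (n + 1) := by
  rw [lvl_succ]
  exact Finset.subset_union_left

theorem F_subset_lvl (M : MDP S A) (F : Finset S) (n : ℕ) : F ⊆ lvl M F n := by
  induction n with
  | zero => rw [lvl_zero]
  | succ n IH => exact IH.trans (lvl_subset_succ M F n)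

theorem reachAux_pos_mem_lvl (M : MDP S A) (σ : Scheduler M) (F : Finset S) (n : ℕ) :
    ∀ (h : List (S × A)) (s : S), 0 < reachAux M σ F n h s → s ∈ lvl M F n := by
  classical
  induction n with
  | zero =>
    intro h s hpos
    rw [reachAux_zero] at hpos
    rw [lvl_zero]
    by_contra hs
    rw [if_neg hs] at hpos
    exact lt_irrefl _ hpos
  | succ n IH =>
    intro h s hpos
    rw [reachAux_succ] at hpos
    by_cases hsF : s ∈ F
    · exact F_subset_lvl M F (n + 1) hsF
    · rw [if_neg hsF] at hpos
      have ⟨a, ha⟩ : ∃ a, 0 < σ.choice h s a *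
          ∑ t : S, M.prob s a t * reachAux M σ F n (h ++ [(s, a)]) t := by
        by_contra hc
        push_neg at hc
        exact absurd (Finset.sum_nonpos fun a _ => hc a) (not_le.mpr hpos)
      have hσpos : 0 < σ.choice h s a := by
        rcases (σ.choice_nonneg h s a).lt_or_eq with h' | h'
        · exact h'
        · rw [← h', zero_mul] at ha; exact absurd ha (lt_irrefl 0)
      have hen : M.enabled s a := σ.choice_support h s a (ne_of_gt hσpos)
      have hX : 0 < ∑ t : S, M.prob s a t * reachAux M σ F n (h ++ [(s, a)]) t := by
        by_contra hc
        push_neg at hc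
        exact absurd ha (not_lt.mpr (mul_nonpos_of_nonneg_of_nonpos (le_of_lt hσpos) hc))
      have ⟨t, ht⟩ : ∃ t, 0 < M.prob s a t * reachAux M σ F n (h ++ [(s, a)]) t := by
        by_contra hc
        push_neg at hc
        exact absurd (Finset.sum_nonpos fun t _ => hc t) (not_le.mpr hX)
      have hPpos : 0 < M.prob s a t := by
        rcases (prob_nonneg M s a t).lt_or_eq with h' | h'
        · exact h'
        · rw [← h', zero_mul] at ht; exact absurd ht (lt_irrefl 0)
      have hrpos : 0 < reachAux M σ F n (h ++ [(s, a)]) t := by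
        by_contra hc
        push_neg at hc
        exact absurd ht (not_lt.mpr (mul_nonpos_of_nonneg_of_nonpos (le_of_lt hPpos) hc))
      have htlvl := IH _ t hrpos
      have hsum : 0 < ∑ t' ∈ lvl M F n, M.prob s a t' :=
        lt_of_lt_of_le hPpos (Finset.single_le_sum (fun t' _ => prob_nonneg M s a t') htlvl)
      rw [lvl_succ]
      refine Finset.mem_union_right _ ?_
      rw [Finset.mem_filter]
      exact ⟨Finset.mem_univ s, a, hen, hsum⟩

theorem exists_mem_lvl (M : MDP S A) (F : Finset S)
    (hform : ∀ s, ∃ σ : Scheduler M, 0 < prReachFrom M σ F s) (s : S) :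
    ∃ n, s ∈ lvl M F n := by
  obtain ⟨σ, hσ⟩ := hform s
  have ⟨n, hn⟩ : ∃ n, 0 < reachAux M σ F n [] s := by
    by_contra hc
    push_neg at hc
    have : prReachFrom M σ F s ≤ 0 := ciSup_le hc
    exact absurd hσ (not_lt.mpr this)
  exact ⟨n, reachAux_pos_mem_lvl M σ F n [] s hn⟩

/-- in reachability form, a super-harmonic vector is nonnegative outside `F`. -/
theorem cert_nonneg (M : MDP S A) (F : Finset S)
    (hform : ∀ s, ∃ σ : Scheduler M, 0 < prReachFrom M σ F s) (x : S → ℝ)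
    (hx : ∀ s ∉ F, ∀ a, M.enabled s a → ∑ t ∈ Fᶜ, M.prob s a t * x t ≤ x s) :
    ∀ s ∉ F, 0 ≤ x s := by
  classical
  by_contra hc
  push_neg at hc
  obtain ⟨s₀, hs₀F, hs₀x⟩ := hc
  obtain ⟨sm, hsmC, hsm⟩ := Finset.exists_min_image Fᶜ x
    ⟨s₀, Finset.mem_compl.mpr hs₀F⟩
  set m := x sm with hm
  have hmneg : m < 0 := lt_of_le_of_lt (hsm s₀ (Finset.mem_compl.mpr hs₀F)) hs₀x
  have key : ∀ n, ∀ s ∈ (Fᶜ : Finset S), x s = m → s ∉ lvl M F n := by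
    intro n
    induction n with
    | zero =>
      intro s hsC _ hmem
      rw [lvl_zero] at hmem
      exact absurd hmem (Finset.mem_compl.mp hsC)
    | succ n IH =>
      intro s hsC hsx hmem
      rw [lvl_succ, Finset.mem_union] at hmem
      rcases hmem with hmem | hmem
      · exact IH s hsC hsx hmem
      · rw [Finset.mem_filter] at hmem
        obtain ⟨-, a, hen, hsum⟩ := hmem
        have hxs := hx s (Finset.mem_compl.mp hsC) a hen
        rw [hsx] at hxs
        have hlow : ∀ t ∈ (Fᶜ : Finset S), M.prob s a t * m ≤ M.prob s a t * x t :=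
          fun t htC => mul_le_mul_of_nonneg_left (hsm t htC) (prob_nonneg M s a t)
        have h1 : (∑ t ∈ Fᶜ, M.prob s a t) * m ≤ m := by
          rw [Finset.sum_mul]
          calc ∑ t ∈ Fᶜ, M.prob s a t * m ≤ ∑ t ∈ Fᶜ, M.prob s a t * x t :=
                Finset.sum_le_sum hlow
            _ ≤ m := hxs
        have h2 : ∑ t ∈ Fᶜ, M.prob s a t ≤ 1 := by
          calc ∑ t ∈ Fᶜ, M.prob s a t ≤ ∑ t : S, M.prob s a t :=
                Finset.sum_le_sum_of_subset_of_nonneg (Finset.subset_univ _)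
                  (fun t _ _ => prob_nonneg M s a t)
            _ = 1 := prob_sum_eq_one M hen
        have hq1 : ∑ t ∈ Fᶜ, M.prob s a t = 1 := by
          by_contra hne
          have hlt : ∑ t ∈ Fᶜ, M.prob s a t < 1 := lt_of_le_of_ne h2 hne
          nlinarith
        have hF0 : ∀ t ∈ F, M.prob s a t = 0 := by
          have hsplit : ∑ t ∈ Fᶜ, M.prob s a t + ∑ t ∈ F, M.prob s a t = 1 := by
            rw [← prob_sum_eq_one M hen (s := s) (a := a)]
            rw [← Finset.sum_add_sum_compl F (M.prob s a), add_comm]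
          have : ∑ t ∈ F, M.prob s a t = 0 := by linarith [hq1]
          intro t htF
          have := (Finset.sum_eq_zero_iff_of_nonneg
            (fun t _ => prob_nonneg M s a t)).mp this
          exact this t htF
        have heq : ∀ t ∈ (Fᶜ : Finset S), M.prob s a t * (x t - m) = 0 := by
          have hsum0 : ∑ t ∈ Fᶜ, M.prob s a t * (x t - m) ≤ 0 := by
            have : ∑ t ∈ Fᶜ, M.prob s a t * (x t - m)
                = ∑ t ∈ Fᶜ, M.prob s a t * x t - (∑ t ∈ Fᶜ, M.prob s a t) * m := by
              rw [Finset.sum_mul, ← Finset.sum_sub_distrib]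
              exact Finset.sum_congr rfl fun t _ => by ring
            rw [this, hq1, one_mul]
            linarith
          intro t htC
          have hnn : ∀ t ∈ (Fᶜ : Finset S), 0 ≤ M.prob s a t * (x t - m) :=
            fun t' ht' => mul_nonneg (prob_nonneg M s a t') (sub_nonneg.mpr (hsm t' ht'))
          have := Finset.sum_eq_zero_iff_of_nonneg hnn
          exact (this.mp (le_antisymm hsum0 (Finset.sum_nonneg hnn))) t htC
        have ⟨t, htlvl, htP⟩ : ∃ t ∈ lvl M F n, 0 < M.prob s a t := by
          by_contra hcon
          push_neg at hcon
          have : ∑ t ∈ lvl M F n, M.prob s a t ≤ 0 := Finset.sum_nonpos fun t ht =>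
            hcon t ht
          exact absurd hsum (not_lt.mpr this)
        have htC : t ∈ (Fᶜ : Finset S) := by
          rw [Finset.mem_compl]
          intro htF
          rw [hF0 t htF] at htP
          exact lt_irrefl _ htP
        have htx : x t = m := by
          have := heq t htC
          rcases mul_eq_zero.mp this with h' | h'
          · exact absurd h' (ne_of_gt htP)
          · linarith [sub_eq_zero.mp h']
        exact IH t htC htx htlvl
  obtain ⟨n, hn⟩ := exists_mem_lvl M F hform sm
  exact key n sm hsmC hm.symm hn

theorem mul_sum_swap {α β : Type*} [Fintype α] [Fintype β] (c : ℝ) (f : α → β → ℝ) :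
    ∑ i : α, c * ∑ t : β, f i t = c * ∑ t : β, ∑ i : α, f i t := by
  rw [← Finset.mul_sum, Finset.sum_comm]

theorem sum_F_ite (M : MDP S A) {F Gi : Finset S} (hGi : Gi ⊆ F) (s : S) (a : A) (w : S → ℝ)
    (hw1 : ∀ t ∈ Gi, w t = 1) (hw0 : ∀ t ∈ F, t ∉ Gi → w t = 0) :
    ∑ t ∈ F, M.prob s a t * w t = ∑ t ∈ Gi, M.prob s a t := by
  classical
  have h1 : ∀ t ∈ F, M.prob s a t * w t = if t ∈ Gi then M.prob s a t else 0 := by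
    intro t htF
    by_cases htG : t ∈ Gi
    · rw [if_pos htG, hw1 t htG, mul_one]
    · rw [if_neg htG, hw0 t htF htG, mul_zero]
  rw [Finset.sum_congr rfl h1, Finset.sum_ite_mem, Finset.inter_eq_right.mpr hGi]

/-- soundness of the certificate: the weighted reachability probabilities are bounded by `x`. -/
theorem sound_aux (M : MDP S A) {F : Finset S}
    (habs : ∀ s ∈ F, ∀ a, M.enabled s a → M.prob s a s = 1)
    {k : ℕ} (G : Fin k → Finset S) (hG : ∀ i, G i ⊆ F) (x : S → ℝ) (z : Fin k → ℝ)
    (hz : ∀ i, 0 ≤ z i) (hxnn : ∀ s ∉ F, 0 ≤ x s)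
    (hA : ∀ s ∉ F, ∀ a, M.enabled s a →
      ∑ i, (∑ t ∈ G i, M.prob s a t) * z i + ∑ t ∈ Fᶜ, M.prob s a t * x t ≤ x s)
    (σ : Scheduler M) (n : ℕ) :
    ∀ (h : List (S × A)) (s : S), s ∉ F → ∑ i, z i * reachAux M σ (G i) n h s ≤ x s := by
  induction n with
  | zero =>
    intro h s hs
    have : ∀ i ∈ Finset.univ, z i * reachAux M σ (G i) 0 h s = 0 := by
      intro i _
      rw [reachAux_zero, if_neg (fun hmem => hs (hG i hmem)), mul_zero]
    rw [Finset.sum_eq_zero this]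
    exact hxnn s hs
  | succ n IH =>
    intro h s hs
    have hrw : ∑ i, z i * reachAux M σ (G i) (n + 1) h s
        = ∑ a : A, σ.choice h s a *
            ∑ t : S, M.prob s a t * ∑ i, z i * reachAux M σ (G i) n (h ++ [(s, a)]) t := by
      have h1 : ∀ i ∈ Finset.univ, z i * reachAux M σ (G i) (n + 1) h s
          = ∑ a : A, σ.choice h s a *
              ∑ t : S, M.prob s a t * (z i * reachAux M σ (G i) n (h ++ [(s, a)]) t) := by
        intro i _
        rw [reachAux_succ, if_neg (fun hmem => hs (hG i hmem)), Finset.mul_sum]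
        refine Finset.sum_congr rfl fun a _ => ?_
        rw [Finset.mul_sum, Finset.mul_sum, Finset.mul_sum]
        refine Finset.sum_congr rfl fun t _ => by ring
      rw [Finset.sum_congr rfl h1, Finset.sum_comm]
      refine Finset.sum_congr rfl fun a _ => ?_
      rw [mul_sum_swap]
      congr 1
      exact Finset.sum_congr rfl fun t _ => (Finset.mul_sum _ _ _).symm
    rw [hrw]
    calc ∑ a : A, σ.choice h s a *
          ∑ t : S, M.prob s a t * ∑ i, z i * reachAux M σ (G i) n (h ++ [(s, a)]) t
        ≤ ∑ a : A, σ.choice h s a * x s := by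
          refine Finset.sum_le_sum fun a _ => ?_
          by_cases hσ : σ.choice h s a = 0
          · rw [hσ, zero_mul, zero_mul]
          · refine mul_le_mul_of_nonneg_left ?_ (σ.choice_nonneg h s a)
            have hen := σ.choice_support h s a hσ
            set B : S → ℝ := fun t => ∑ i, z i * reachAux M σ (G i) n (h ++ [(s, a)]) t with hB
            have hsplit : ∑ t : S, M.prob s a t * B t
                = ∑ t ∈ F, M.prob s a t * B t + ∑ t ∈ Fᶜ, M.prob s a t * B t :=
              (Finset.sum_add_sum_compl F _).symm
            have hFbound : ∑ t ∈ F, M.prob s a t * B t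
                = ∑ i, (∑ t ∈ G i, M.prob s a t) * z i := by
              have hBF : ∀ t ∈ F, M.prob s a t * B t
                  = M.prob s a t * ∑ i, z i * (if t ∈ G i then 1 else 0) := by
                intro t htF
                congr 1
                refine Finset.sum_congr rfl fun i _ => ?_
                by_cases htG : t ∈ G i
                · rw [if_pos htG, reachAux_of_mem M σ htG]
                · rw [if_neg htG, reachAux_absorb M habs σ htF htG]
              rw [Finset.sum_congr rfl hBF]
              rw [show ∀ (f : S → ℝ) (g : S → Fin k → ℝ),
                  ∑ t ∈ F, f t * ∑ i, g t i = ∑ i, ∑ t ∈ F, f t * g t i from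
                fun f g => by rw [Finset.sum_comm]
                              exact Finset.sum_congr rfl fun t _ => by rw [Finset.mul_sum]]
              refine Finset.sum_congr rfl fun i _ => ?_
              have : ∀ t ∈ F, M.prob s a t * (z i * (if t ∈ G i then 1 else 0))
                  = if t ∈ G i then M.prob s a t * z i else 0 := by
                intro t _
                by_cases htG : t ∈ G i <;> simp [htG]
              rw [Finset.sum_congr rfl this, Finset.sum_ite_mem,
                Finset.inter_eq_right.mpr (hG i), Finset.sum_mul]
            have hCbound : ∑ t ∈ Fᶜ, M.prob s a t * B t ≤ ∑ t ∈ Fᶜ, M.prob s a t * x t := by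
              refine Finset.sum_le_sum fun t htC => ?_
              exact mul_le_mul_of_nonneg_left
                (IH _ t (Finset.mem_compl.mp htC)) (prob_nonneg M s a t)
            calc ∑ t : S, M.prob s a t * B t
                = ∑ t ∈ F, M.prob s a t * B t + ∑ t ∈ Fᶜ, M.prob s a t * B t := hsplit
              _ ≤ ∑ i, (∑ t ∈ G i, M.prob s a t) * z i + ∑ t ∈ Fᶜ, M.prob s a t * x t := by
                  rw [hFbound]; linarith
              _ ≤ x s := hA s hs a hen
      _ = x s := by rw [← Finset.sum_mul, σ.choice_sum_one h s, one_mul]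

open scoped Classical in
/-- the memoryless scheduler induced by a flow `y`. -/
noncomputable def flowSched (M : MDP S A) (y : S → A → ℝ) (hy0 : ∀ s a, 0 ≤ y s a)
    (hsupp : ∀ s a, y s a ≠ 0 → M.enabled s a) : Scheduler M where
  choice _ s a := if h : 0 < ∑ a', y s a' then y s a / ∑ a', y s a'
    else if a = (M.exists_enabled s).choose then 1 else 0
  choice_nonneg h s a := by
    split
    · exact div_nonneg (hy0 s a) (le_of_lt (by assumption))
    · split <;> norm_num
  choice_sum_one h s := by
    split
    · rw [← Finset.sum_div, div_self (ne_of_gt (by assumption))]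
    · simp
  choice_support h s a ha := by
    split at ha
    · refine hsupp s a fun h0 => ha ?_
      rw [h0, zero_div]
    · split at ha
      · subst ‹a = (M.exists_enabled s).choose›
        exact (M.exists_enabled s).choose_spec
      · exact absurd rfl ha

theorem flowSched_memoryless (M : MDP S A) (y : S → A → ℝ) (hy0 : ∀ s a, 0 ≤ y s a)
    (hsupp : ∀ s a, y s a ≠ 0 → M.enabled s a) (h : List (S × A)) (s : S) (a : A) :
    (flowSched M y hy0 hsupp).choice h s a = (flowSched M y hy0 hsupp).choice [] s a := rfl

theorem flowSched_mul (M : MDP S A) (y : S → A → ℝ) (hy0 : ∀ s a, 0 ≤ y s a)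
    (hsupp : ∀ s a, y s a ≠ 0 → M.enabled s a) (s : S) (a : A) (c : ℝ) :
    (∑ a', y s a') * ((flowSched M y hy0 hsupp).choice [] s a * c) = y s a * c := by
  classical
  show (∑ a', y s a') * ((if h : 0 < ∑ a', y s a' then y s a / ∑ a', y s a'
    else if a = (M.exists_enabled s).choose then 1 else 0) * c) = y s a * c
  by_cases hpos : 0 < ∑ a', y s a'
  · rw [dif_pos hpos]
    field_simp
  · rw [dif_neg hpos]
    have h0 : ∑ a', y s a' = 0 :=
      le_antisymm (not_lt.mp hpos) (Finset.sum_nonneg fun a' _ => hy0 s a')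
    have hya : y s a = 0 := by
      have := (Finset.sum_eq_zero_iff_of_nonneg (fun a' _ => hy0 s a')).mp h0
      exact this a (Finset.mem_univ a)
    rw [h0, hya, zero_mul, zero_mul]

/-- key identity: the flow scheduler reaches `Gi` with probability equal to the flow into `Gi`. -/
theorem flow_reach (M : MDP S A) {F : Finset S}
    (habs : ∀ s ∈ F, ∀ a, M.enabled s a → M.prob s a s = 1)
    (hinit : M.init ∉ F) {Gi : Finset S} (hGi : Gi ⊆ F)
    (y : S → A → ℝ) (hy0 : ∀ s a, 0 ≤ y s a)
    (hyF : ∀ s a, y s a ≠ 0 → s ∉ F) (hsupp : ∀ s a, y s a ≠ 0 → M.enabled s a)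
    (hflow : ∀ t ∉ F, ∑ s, ∑ a, y s a * ((if s = t then (1:ℝ) else 0) - M.prob s a t)
      = if t = M.init then 1 else 0) :
    prReach M (flowSched M y hy0 hsupp) Gi
      = ∑ s, ∑ a, y s a * ∑ t ∈ Gi, M.prob s a t := by
  classical
  set σ := flowSched M y hy0 hsupp with hσ
  set r : S → ℝ := fun s => prReachFrom M σ Gi s with hr
  have hyFz : ∀ s ∈ F, ∀ a, y s a = 0 := by
    intro s hsF a
    by_contra hne
    exact (hyF s a hne) hsF
  -- step 1 : local balance
  have step1 : ∀ s, (∑ a, y s a) * r s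
      = ∑ a, y s a * (∑ t ∈ Gi, M.prob s a t) + ∑ a, y s a * ∑ t ∈ Fᶜ, M.prob s a t * r t := by
    intro s
    by_cases hsF : s ∈ F
    · rw [Finset.sum_eq_zero (fun a _ => by rw [hyFz s hsF a]), zero_mul,
        Finset.sum_eq_zero (fun a _ => by rw [hyFz s hsF a, zero_mul]),
        Finset.sum_eq_zero (fun a _ => by rw [hyFz s hsF a, zero_mul]), add_zero]
    · have hbell := prReachFrom_bellman M σ
        (fun h s a => flowSched_memoryless M y hy0 hsupp h s a) Gi
        (s := s) (fun hmem => hsF (hGi hmem))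
      have : (∑ a, y s a) * r s
          = ∑ a, y s a * ∑ t : S, M.prob s a t * r t := by
        rw [hr]
        dsimp only
        rw [hbell, Finset.mul_sum]
        exact Finset.sum_congr rfl fun a _ => flowSched_mul M y hy0 hsupp s a _
      rw [this]
      rw [← Finset.sum_add_distrib]
      refine Finset.sum_congr rfl fun a _ => ?_
      rw [← mul_add]
      congr 1
      have hsplit : ∑ t : S, M.prob s a t * r t
          = ∑ t ∈ F, M.prob s a t * r t + ∑ t ∈ Fᶜ, M.prob s a t * r t :=
        (Finset.sum_add_sum_compl F _).symm
      rw [hsplit]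
      congr 1
      refine sum_F_ite M hGi s a r ?_ ?_
      · intro t htG; exact prReachFrom_of_mem M σ htG
      · intro t htF htG; exact prReachFrom_absorb M habs σ htF htG
  -- step 2 : sum over all states and cancel
  have step2 : ∑ s, (∑ a, y s a) * r s
      = (∑ s, ∑ a, y s a * ∑ t ∈ Gi, M.prob s a t)
        + ∑ t ∈ Fᶜ, r t * (∑ s, ∑ a, y s a * M.prob s a t) := by
    rw [Finset.sum_congr rfl (fun s _ => step1 s), Finset.sum_add_distrib]
    congr 1
    -- swap the sums in the second term
    rw [show ∑ t ∈ Fᶜ, r t * (∑ s, ∑ a, y s a * M.prob s a t)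
        = ∑ s, ∑ t ∈ Fᶜ, r t * ∑ a, y s a * M.prob s a t from by
      rw [Finset.sum_comm]
      exact Finset.sum_congr rfl fun t _ => Finset.mul_sum _ _ _]
    refine Finset.sum_congr rfl fun s _ => ?_
    rw [show ∑ t ∈ Fᶜ, r t * ∑ a, y s a * M.prob s a t
        = ∑ a, ∑ t ∈ Fᶜ, r t * (y s a * M.prob s a t) from by
      rw [Finset.sum_comm]
      exact Finset.sum_congr rfl fun t _ => Finset.mul_sum _ _ _]
    refine Finset.sum_congr rfl fun a _ => ?_
    rw [Finset.mul_sum]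
    exact Finset.sum_congr rfl fun t _ => by ring
  -- step 3 : use the flow equations
  have step3 : ∀ t ∉ F, ∑ s, ∑ a, y s a * M.prob s a t
      = (∑ a, y t a) - (if t = M.init then 1 else 0) := by
    intro t htF
    have hf := hflow t htF
    have hexp : ∑ s, ∑ a, y s a * ((if s = t then (1:ℝ) else 0) - M.prob s a t)
        = (∑ a, y t a) - ∑ s, ∑ a, y s a * M.prob s a t := by
      have h1 : ∑ s, ∑ a, y s a * ((if s = t then (1:ℝ) else 0) - M.prob s a t)
          = ∑ s, ((if s = t then ∑ a, y s a else 0) - ∑ a, y s a * M.prob s a t) := by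
        refine Finset.sum_congr rfl fun s _ => ?_
        by_cases hst : s = t
        · rw [if_pos hst, if_pos hst, ← Finset.sum_sub_distrib]
          exact Finset.sum_congr rfl fun a _ => by ring
        · rw [if_neg hst, if_neg hst, zero_sub, ← Finset.sum_neg_distrib]
          exact Finset.sum_congr rfl fun a _ => by ring
      rw [h1, Finset.sum_sub_distrib, Finset.sum_ite_eq' Finset.univ t (fun s => ∑ a, y s a)]
      simp
    rw [hexp] at hf
    linarith [hf]
  -- step 4 : substitute the flow equations
  have step4 : ∑ t ∈ Fᶜ, r t * (∑ s, ∑ a, y s a * M.prob s a t)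
      = ∑ t ∈ Fᶜ, r t * (∑ a, y t a) - r M.init := by
    rw [Finset.sum_congr rfl (fun t ht => by
      rw [step3 t (Finset.mem_compl.mp ht)])]
    have h2 : ∀ t ∈ (Fᶜ : Finset S),
        r t * ((∑ a, y t a) - (if t = M.init then 1 else 0))
        = r t * (∑ a, y t a) - (if t = M.init then r t else 0) := by
      intro t _
      by_cases ht : t = M.init
      · rw [if_pos ht, if_pos ht]; ring
      · rw [if_neg ht, if_neg ht]; ring
    rw [Finset.sum_congr rfl h2, Finset.sum_sub_distrib]
    congr 1
    rw [Finset.sum_ite_eq' Fᶜ M.init r, if_pos (Finset.mem_compl.mpr hinit)]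
  -- step 5 : restrict the total sum to `Fᶜ`
  have step5 : ∑ s, (∑ a, y s a) * r s = ∑ t ∈ Fᶜ, r t * (∑ a, y t a) := by
    rw [← Finset.sum_add_sum_compl F (fun s => (∑ a, y s a) * r s)]
    rw [Finset.sum_eq_zero (fun s hs => by
      rw [Finset.sum_eq_zero (fun a _ => hyFz s hs a), zero_mul]), zero_add]
    exact Finset.sum_congr rfl fun t _ => by ring
  rw [step5, step4] at step2
  show prReachFrom M σ Gi M.init = _
  linarith [step2]

theorem sum_subtype_dite {γ : Type*} [Fintype γ] (p : γ → Prop) [DecidablePred p]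
    (f : Subtype p → ℝ) :
    ∑ r : Subtype p, f r = ∑ g : γ, if h : p g then f ⟨g, h⟩ else 0 := by
  have h1 : ∑ r : Subtype p, f r
      = ∑ g ∈ Finset.filter p Finset.univ, (if h : p g then f ⟨g, h⟩ else 0) := by
    refine Finset.sum_bij' (fun r _ => r.1) (fun g hg => ⟨g, (Finset.mem_filter.mp hg).2⟩)
      ?_ ?_ ?_ ?_ ?_
    · intro r _; simp [r.2]
    · intro g hg; simp
    · intro r _; rfl
    · intro g hg; rfl
    · intro r _; simp [r.2]
  rw [h1]
  exact Finset.sum_subset (Finset.filter_subset _ _)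
    (fun g _ hg => dif_neg (by simpa using hg))

theorem sum_dite_prod {γ : Type*} [Fintype γ] (p : γ → Prop) [DecidablePred p]
    (f : Subtype p → ℝ) (g : γ → ℝ) :
    ∑ c : γ, (if h : p c then f ⟨c, h⟩ else 0) * g c = ∑ r : Subtype p, f r * g r.1 := by
  rw [sum_subtype_dite p (fun r => f r * g r.1)]
  refine Finset.sum_congr rfl fun c _ => ?_
  split <;> simp

end MDPAux

open MDP MDPAux

/-- Farkas certificates for universally quantified disjunctive reachability queries with
non-strict upper bounds: every scheduler satisfies `⋁ᵢ Pr^σ(◇Gᵢ) ≤ λᵢ` iff there are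
`x ∈ ℝ^S` and `z ≥ 0`, `z ≠ 0`, with `A x ≥ T z` and `x(s_in) ≤ λᵀ z`. -/
theorem forall_disj_reach_certificates_nonstrict {S A : Type} [Fintype S] [Fintype A]
    [DecidableEq S] (M : MDP S A) (F : Finset S)
    (habs : ∀ s ∈ F, ∀ a, M.enabled s a → M.prob s a s = 1)
    (hform : ∀ s, ∃ σ : MDP.Scheduler M, 0 < MDP.prReachFrom M σ F s)
    (hinit : M.init ∉ F)
    {k : ℕ} (G : Fin k → Finset S) (hG : ∀ i, G i ⊆ F) (lam : Fin k → ℝ) :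
    (∀ σ : MDP.Scheduler M, ∃ i, MDP.prReach M σ (G i) ≤ lam i) ↔
      ∃ (x : S → ℝ) (z : Fin k → ℝ),
        (∀ i, 0 ≤ z i) ∧ z ≠ 0 ∧
        (∀ p : S × A, p.1 ∉ F → M.enabled p.1 p.2 →
          ∑ i, (∑ t ∈ G i, M.prob p.1 p.2 t) * z i ≤
            ∑ s ∈ Fᶜ, ((if p.1 = s then (1 : ℝ) else 0) - M.prob p.1 p.2 s) * x s) ∧
        x M.init ≤ ∑ i, lam i * z i := by
  classical
  have hrhs : ∀ (x : S → ℝ) (s : S), s ∉ F → ∀ a : A,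
      ∑ t ∈ Fᶜ, ((if s = t then (1:ℝ) else 0) - M.prob s a t) * x t
      = x s - ∑ t ∈ Fᶜ, M.prob s a t * x t := by
    intro x s hs a
    have h1 : ∀ t ∈ (Fᶜ : Finset S), ((if s = t then (1:ℝ) else 0) - M.prob s a t) * x t
        = (if s = t then x t else 0) - M.prob s a t * x t := by
      intro t _
      split <;> ring
    rw [Finset.sum_congr rfl h1, Finset.sum_sub_distrib, Finset.sum_ite_eq,
      if_pos (Finset.mem_compl.mpr hs)]
  constructor
  · -- completeness: no certificate would contradict the assumption, via Farkas' lemma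
    intro hLHS
    by_contra hnc
    rcases Nat.eq_zero_or_pos k with hk | hk
    · subst hk
      obtain ⟨i, -⟩ := hLHS (detSched M)
      exact i.elim0
    set q : S × A → Prop := fun c => c.1 ∉ F ∧ M.enabled c.1 c.2 with hq
    set M₀ : ({c : S × A // q c} ⊕ (Fin k ⊕ (Unit ⊕ Unit))) → ({s : S // s ∉ F} ⊕ Fin k) → ℝ :=
      fun r v =>
      match r, v with
      | Sum.inl rr, Sum.inl t => (if rr.1.1 = t.1 then 1 else 0) - M.prob rr.1.1 rr.1.2 t.1
      | Sum.inl rr, Sum.inr i => -(∑ t ∈ G i, M.prob rr.1.1 rr.1.2 t)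
      | Sum.inr (Sum.inl _), Sum.inl _ => 0
      | Sum.inr (Sum.inl j), Sum.inr i => if i = j then 1 else 0
      | Sum.inr (Sum.inr (Sum.inl _)), Sum.inl _ => 0
      | Sum.inr (Sum.inr (Sum.inl _)), Sum.inr _ => 1
      | Sum.inr (Sum.inr (Sum.inr _)), Sum.inl t => if t.1 = M.init then -1 else 0
      | Sum.inr (Sum.inr (Sum.inr _)), Sum.inr i => lam i with hM₀
    set b₀ : ({c : S × A // q c} ⊕ (Fin k ⊕ (Unit ⊕ Unit))) → ℝ := fun r =>
      match r with
      | Sum.inl _ => 0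
      | Sum.inr (Sum.inl _) => 0
      | Sum.inr (Sum.inr (Sum.inl _)) => 1
      | Sum.inr (Sum.inr (Sum.inr _)) => 0 with hb₀
    have hCsum : ∀ (f : S → ℝ), ∑ t : {s : S // s ∉ F}, f t.1 = ∑ t ∈ Fᶜ, f t := by
      intro f
      exact (Finset.sum_subtype Fᶜ (fun t => Finset.mem_compl) f).symm
    have hdel : ∀ (g : Fin k → ℝ) (i : Fin k),
        ∑ i' : Fin k, (if i' = i then (1:ℝ) else 0) * g i' = g i := by
      intro g i
      rw [Finset.sum_congr rfl (fun i' (_ : i' ∈ Finset.univ) => by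
        show (if i' = i then (1:ℝ) else 0) * g i' = if i' = i then g i' else 0
        split <;> simp), Finset.sum_ite_eq' Finset.univ i, if_pos (Finset.mem_univ i)]
    have hinfeas : ¬ ∃ w : ({s : S // s ∉ F} ⊕ Fin k) → ℝ,
        ∀ r : ({c : S × A // q c} ⊕ (Fin k ⊕ (Unit ⊕ Unit))), b₀ r ≤ ∑ v, M₀ r v * w v := by
      rintro ⟨w, hw⟩
      apply hnc
      refine ⟨(fun s => if h : s ∉ F then w (Sum.inl ⟨s, h⟩) else 0),
        (fun i => w (Sum.inr i)), ?_, ?_, ?_, ?_⟩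
      · intro i
        have h := hw (Sum.inr (Sum.inl i))
        simp only [hM₀, hb₀, Fintype.sum_sum_type, zero_mul, Finset.sum_const_zero,
          zero_add] at h
        rwa [hdel (fun i' => w (Sum.inr i')) i] at h
      · intro heq
        have h := hw (Sum.inr (Sum.inr (Sum.inl ())))
        simp only [hM₀, hb₀, Fintype.sum_sum_type, zero_mul, Finset.sum_const_zero,
          zero_add, one_mul] at h
        have hz0 : ∀ i : Fin k, w (Sum.inr i) = 0 := fun i => congrFun heq i
        rw [Finset.sum_congr rfl (fun i _ => hz0 i), Finset.sum_const_zero] at h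
        linarith
      · intro p hp1 hp2
        have h := hw (Sum.inl ⟨p, ⟨hp1, hp2⟩⟩)
        simp only [hM₀, hb₀, Fintype.sum_sum_type] at h
        have hfst : ∑ t : {s : S // s ∉ F},
            ((if p.1 = t.1 then (1:ℝ) else 0) - M.prob p.1 p.2 t.1) * w (Sum.inl t)
            = ∑ t ∈ Fᶜ, ((if p.1 = t then (1:ℝ) else 0) - M.prob p.1 p.2 t) *
                (if h : t ∉ F then w (Sum.inl ⟨t, h⟩) else 0) := by
          rw [← hCsum (fun t => ((if p.1 = t then (1:ℝ) else 0) - M.prob p.1 p.2 t) *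
            (if h : t ∉ F then w (Sum.inl ⟨t, h⟩) else 0))]
          exact Finset.sum_congr rfl fun t _ => by rw [dif_pos t.2]
        rw [hfst] at h
        have hsnd : ∑ i, -(∑ t ∈ G i, M.prob p.1 p.2 t) * w (Sum.inr i)
            = -∑ i, (∑ t ∈ G i, M.prob p.1 p.2 t) * w (Sum.inr i) := by
          rw [← Finset.sum_neg_distrib]
          exact Finset.sum_congr rfl fun i _ => by ring
        rw [hsnd] at h
        linarith
      · have h := hw (Sum.inr (Sum.inr (Sum.inr ())))
        simp only [hM₀, hb₀, Fintype.sum_sum_type] at h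
        have hfst : ∑ t : {s : S // s ∉ F}, (if t.1 = M.init then (-1:ℝ) else 0) * w (Sum.inl t)
            = -(if h : M.init ∉ F then w (Sum.inl ⟨M.init, h⟩) else 0) := by
          have e1 : ∑ t : {s : S // s ∉ F}, (if t.1 = M.init then (-1:ℝ) else 0) * w (Sum.inl t)
              = ∑ t ∈ Fᶜ, (if t = M.init then (-1:ℝ) else 0) *
                  (if h : t ∉ F then w (Sum.inl ⟨t, h⟩) else 0) := by
            rw [← hCsum (fun t => (if t = M.init then (-1:ℝ) else 0) *
              (if h : t ∉ F then w (Sum.inl ⟨t, h⟩) else 0))]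
            exact Finset.sum_congr rfl fun t _ => by rw [dif_pos t.2]
          rw [e1, Finset.sum_congr rfl (fun t (ht : t ∈ Fᶜ) =>
            show (if t = M.init then (-1:ℝ) else 0) *
                (if h : t ∉ F then w (Sum.inl ⟨t, h⟩) else 0)
              = -(if t = M.init then (if h : t ∉ F then w (Sum.inl ⟨t, h⟩) else 0) else 0) from by
            split <;> ring), Finset.sum_neg_distrib, Finset.sum_ite_eq' Fᶜ M.init,
            if_pos (Finset.mem_compl.mpr hinit)]
        rw [hfst] at h
        rw [dif_pos hinit] at h
        dsimp only
        rw [dif_pos hinit]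
        linarith
    obtain ⟨y, hy0, hyM, hyb⟩ := farkas_infeasible M₀ b₀ hinfeas
    -- name the dual components
    set yR : {c : S × A // q c} → ℝ := fun rr => y (Sum.inl rr) with hyR
    set wI : Fin k → ℝ := fun i => y (Sum.inr (Sum.inl i)) with hwI
    set u : ℝ := y (Sum.inr (Sum.inr (Sum.inl ()))) with hu
    set v : ℝ := y (Sum.inr (Sum.inr (Sum.inr ()))) with hv
    have hupos : 0 < u := by
      have := hyb
      simp only [hb₀, Fintype.sum_sum_type, mul_zero, Finset.sum_const_zero, zero_add,
        add_zero, mul_one, Finset.univ_unique, Finset.sum_singleton] at this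
      convert this using 2 <;> simp [hu]
    have hx_eq : ∀ t : {s : S // s ∉ F},
        ∑ rr : {c : S × A // q c}, yR rr *
          ((if rr.1.1 = t.1 then (1:ℝ) else 0) - M.prob rr.1.1 rr.1.2 t.1)
        + v * (if t.1 = M.init then -1 else 0) = 0 := by
      intro t
      have h := hyM (Sum.inl t)
      simp only [hM₀, Fintype.sum_sum_type, mul_zero, Finset.sum_const_zero, zero_add,
        add_zero, Finset.univ_unique, Finset.sum_singleton] at h
      convert h using 2 <;> simp [hyR, hv]
    have hz_eq : ∀ i : Fin k,
        ∑ rr : {c : S × A // q c}, yR rr * (-(∑ t ∈ G i, M.prob rr.1.1 rr.1.2 t))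
        + (wI i + (u + v * lam i)) = 0 := by
      intro i
      have h := hyM (Sum.inr i)
      simp only [hM₀, Fintype.sum_sum_type, mul_zero, Finset.sum_const_zero, zero_add,
        add_zero, mul_one, Finset.univ_unique, Finset.sum_singleton] at h
      have hmid : ∑ j : Fin k, y (Sum.inr (Sum.inl j)) * (if i = j then (1:ℝ) else 0)
          = wI i := by
        rw [Finset.sum_congr rfl (fun j (_ : j ∈ Finset.univ) => by
          show y (Sum.inr (Sum.inl j)) * (if i = j then (1:ℝ) else 0)
            = if i = j then y (Sum.inr (Sum.inl j)) else 0
          split <;> simp), Finset.sum_ite_eq Finset.univ i, if_pos (Finset.mem_univ i)]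
      rw [hmid] at h
      convert h using 2 <;> simp [hyR, hu, hv]
    have hyR0 : ∀ rr, 0 ≤ yR rr := fun rr => hy0 (Sum.inl rr)
    have hwI0 : ∀ i, 0 ≤ wI i := fun i => hy0 (Sum.inr (Sum.inl i))
    -- the homogenization variable is positive
    have hvpos : 0 < v := by
      rcases (hy0 (Sum.inr (Sum.inr (Sum.inr ())))).lt_or_eq with h | h
      · exact h
      exfalso
      have hv0 : v = 0 := h.symm
      set i0 : Fin k := ⟨0, hk⟩
      have hzero : ∀ t : {s : S // s ∉ F}, ∑ rr : {c : S × A // q c}, yR rr *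
          ((if rr.1.1 = t.1 then (1:ℝ) else 0) - M.prob rr.1.1 rr.1.2 t.1) = 0 := by
        intro t
        have := hx_eq t
        rw [hv0, zero_mul, add_zero] at this
        exact this
      have hFsum : ∀ rr : {c : S × A // q c},
          ∑ t ∈ Fᶜ, ((if rr.1.1 = t then (1:ℝ) else 0) - M.prob rr.1.1 rr.1.2 t)
          = ∑ t ∈ F, M.prob rr.1.1 rr.1.2 t := by
        intro rr
        rw [Finset.sum_sub_distrib, Finset.sum_ite_eq, if_pos (Finset.mem_compl.mpr rr.2.1)]
        have htot : ∑ t ∈ Fᶜ, M.prob rr.1.1 rr.1.2 t + ∑ t ∈ F, M.prob rr.1.1 rr.1.2 t = 1 := by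
          rw [← prob_sum_eq_one M rr.2.2]
          rw [← Finset.sum_add_sum_compl F (M.prob rr.1.1 rr.1.2), add_comm]
        linarith
      have hkey : ∑ rr : {c : S × A // q c}, yR rr * ∑ t ∈ F, M.prob rr.1.1 rr.1.2 t = 0 := by
        have hswap : ∑ t : {s : S // s ∉ F}, (∑ rr : {c : S × A // q c}, yR rr *
            ((if rr.1.1 = t.1 then (1:ℝ) else 0) - M.prob rr.1.1 rr.1.2 t.1)) = 0 :=
          Finset.sum_eq_zero fun t _ => hzero t
        rw [Finset.sum_comm] at hswap
        rw [Finset.sum_congr rfl (fun rr (_ : rr ∈ Finset.univ) => by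
          rw [← Finset.mul_sum,
            hCsum (fun t => (if rr.1.1 = t then (1:ℝ) else 0) - M.prob rr.1.1 rr.1.2 t),
            hFsum rr])] at hswap
        exact hswap
      have hterm : ∀ rr : {c : S × A // q c},
          yR rr * ∑ t ∈ F, M.prob rr.1.1 rr.1.2 t = 0 := by
        intro rr
        have hnn : ∀ rr ∈ (Finset.univ : Finset {c : S × A // q c}),
            0 ≤ yR rr * ∑ t ∈ F, M.prob rr.1.1 rr.1.2 t := fun rr _ =>
          mul_nonneg (hyR0 rr) (Finset.sum_nonneg fun t _ => prob_nonneg M _ _ t)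
        exact (Finset.sum_eq_zero_iff_of_nonneg hnn).mp hkey rr (Finset.mem_univ rr)
      have hGzero : ∑ rr : {c : S × A // q c},
          yR rr * (-(∑ t ∈ G i0, M.prob rr.1.1 rr.1.2 t)) = 0 := by
        refine Finset.sum_eq_zero fun rr _ => ?_
        have hle : ∑ t ∈ G i0, M.prob rr.1.1 rr.1.2 t ≤ ∑ t ∈ F, M.prob rr.1.1 rr.1.2 t :=
          Finset.sum_le_sum_of_subset_of_nonneg (hG i0) (fun t _ _ => prob_nonneg M _ _ t)
        have hge : 0 ≤ ∑ t ∈ G i0, M.prob rr.1.1 rr.1.2 t :=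
          Finset.sum_nonneg fun t _ => prob_nonneg M _ _ t
        rcases (hyR0 rr).lt_or_eq with hy | hy
        · have h0 : ∑ t ∈ F, M.prob rr.1.1 rr.1.2 t = 0 := by
            have := hterm rr
            rcases mul_eq_zero.mp this with h' | h'
            · exact absurd h'.symm (ne_of_lt hy)
            · exact h'
          have : ∑ t ∈ G i0, M.prob rr.1.1 rr.1.2 t = 0 := le_antisymm (h0 ▸ hle) hge
          rw [this, neg_zero, mul_zero]
        · rw [← hy, zero_mul]
      have := hz_eq i0
      rw [hGzero, hv0, zero_mul, add_zero] at this
      have := hwI0 i0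
      linarith
    -- build the flow and the corresponding scheduler
    set yfull : S → A → ℝ := fun s a => if h : q (s, a) then yR ⟨(s, a), h⟩ / v else 0 with hyfull
    have hyfull0 : ∀ s a, 0 ≤ yfull s a := by
      intro s a
      rw [hyfull]
      dsimp only
      split
      · exact div_nonneg (hyR0 _) hvpos.le
      · exact le_refl 0
    have hyfullF : ∀ s a, yfull s a ≠ 0 → s ∉ F := by
      intro s a hne
      rw [hyfull] at hne
      dsimp only at hne
      by_contra hsF
      exact hne (dif_neg (fun hq' => hq'.1 hsF))
    have hyfullE : ∀ s a, yfull s a ≠ 0 → M.enabled s a := by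
      intro s a hne
      rw [hyfull] at hne
      dsimp only at hne
      by_contra hen
      exact hne (dif_neg (fun hq' => hen hq'.2))
    have hprod : ∀ (g : S → A → ℝ), ∑ s, ∑ a, yfull s a * g s a
        = ∑ rr : {c : S × A // q c}, (yR rr / v) * g rr.1.1 rr.1.2 := by
      intro g
      have h1 : ∑ c : S × A, yfull c.1 c.2 * g c.1 c.2 = ∑ s, ∑ a, yfull s a * g s a :=
        Fintype.sum_prod_type _
      rw [← h1]
      exact sum_dite_prod q (fun rr => yR rr / v) (fun c => g c.1 c.2)
    have hflow : ∀ t ∉ F, ∑ s, ∑ a, yfull s a * ((if s = t then (1:ℝ) else 0) - M.prob s a t)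
        = if t = M.init then 1 else 0 := by
      intro t htF
      rw [hprod (fun s a => (if s = t then (1:ℝ) else 0) - M.prob s a t)]
      have he := hx_eq ⟨t, htF⟩
      have he' : (∑ rr : {c : S × A // q c}, yR rr *
          ((if rr.1.1 = t then (1:ℝ) else 0) - M.prob rr.1.1 rr.1.2 t))
          + v * (if t = M.init then -1 else 0) = 0 := he
      have he2 : ∑ rr : {c : S × A // q c}, yR rr *
          ((if rr.1.1 = t then (1:ℝ) else 0) - M.prob rr.1.1 rr.1.2 t)
          = v * (if t = M.init then 1 else 0) := by
        by_cases hti : t = M.init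
        · rw [if_pos hti] at he' ⊢
          linarith
        · rw [if_neg hti] at he' ⊢
          linarith
      rw [Finset.sum_congr rfl (fun rr (_ : rr ∈ Finset.univ) => by
        rw [div_mul_eq_mul_div]), ← Finset.sum_div, he2, mul_comm,
        mul_div_assoc, div_self (ne_of_gt hvpos), mul_one]
    set σ := flowSched M yfull hyfull0 hyfullE with hσ
    have hreach : ∀ i, prReach M σ (G i) = lam i + (wI i + u) / v := by
      intro i
      rw [hσ, flow_reach M habs hinit (hG i) yfull hyfull0 hyfullF hyfullE hflow]
      rw [hprod (fun s a => ∑ t ∈ G i, M.prob s a t)]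
      have he3 : ∑ rr : {c : S × A // q c}, yR rr * ∑ t ∈ G i, M.prob rr.1.1 rr.1.2 t
          = wI i + u + v * lam i := by
        have := hz_eq i
        have hneg : ∑ rr : {c : S × A // q c},
            yR rr * (-(∑ t ∈ G i, M.prob rr.1.1 rr.1.2 t))
            = -∑ rr : {c : S × A // q c}, yR rr * ∑ t ∈ G i, M.prob rr.1.1 rr.1.2 t := by
          rw [← Finset.sum_neg_distrib]
          exact Finset.sum_congr rfl fun rr _ => by ring
        rw [hneg] at this
        linarith
      rw [Finset.sum_congr rfl (fun rr (_ : rr ∈ Finset.univ) => by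
        rw [div_mul_eq_mul_div]), ← Finset.sum_div, he3]
      field_simp
      ring
    obtain ⟨i, hi⟩ := hLHS σ
    have hgt : lam i < prReach M σ (G i) := by
      rw [hreach i]
      have : 0 < (wI i + u) / v := div_pos (by linarith [hwI0 i]) hvpos
      linarith
    linarith
  · -- soundness of certificates
    rintro ⟨x, z, hz, hzne, hA, hxi⟩ σ
    by_contra hcon
    push_neg at hcon
    have hA' : ∀ s ∉ F, ∀ a, M.enabled s a →
        ∑ i, (∑ t ∈ G i, M.prob s a t) * z i + ∑ t ∈ Fᶜ, M.prob s a t * x t ≤ x s := by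
      intro s hs a hen
      have h := hA (s, a) hs hen
      rw [hrhs x s hs a] at h
      linarith
    have hxnn : ∀ s ∉ F, 0 ≤ x s := by
      refine cert_nonneg M F hform x (fun s hs a hen => ?_)
      have h := hA' s hs a hen
      have h0 : 0 ≤ ∑ i, (∑ t ∈ G i, M.prob s a t) * z i :=
        Finset.sum_nonneg fun i _ => mul_nonneg
          (Finset.sum_nonneg fun t _ => prob_nonneg M s a t) (hz i)
      linarith
    have hsound := sound_aux M habs G hG x z hz hxnn hA' σ
    have htend : Filter.Tendsto (fun n => ∑ i, z i * reachAux M σ (G i) n [] M.init)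
        Filter.atTop (nhds (∑ i, z i * prReachFrom M σ (G i) M.init)) :=
      tendsto_finset_sum _ fun i _ => Filter.Tendsto.const_mul _ (tendsto_reachAux M σ (G i) M.init)
    have hle : ∑ i, z i * prReachFrom M σ (G i) M.init ≤ x M.init :=
      le_of_tendsto htend (Filter.Eventually.of_forall fun n => hsound n [] M.init hinit)
    obtain ⟨j, hj⟩ := Function.ne_iff.mp hzne
    have hzj : 0 < z j := lt_of_le_of_ne (hz j) (Ne.symm hj)
    have hpr : ∀ i, prReach M σ (G i) = prReachFrom M σ (G i) M.init := fun i => rfl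
    have hstrict : ∑ i, lam i * z i < ∑ i, z i * prReachFrom M σ (G i) M.init := by
      refine Finset.sum_lt_sum (fun i _ => ?_) ⟨j, Finset.mem_univ j, ?_⟩
      · rw [mul_comm]
        exact mul_le_mul_of_nonneg_left (by rw [← hpr i]; exact (hcon i).le) (hz i)
      · rw [mul_comm (lam j)]
        exact mul_lt_mul_of_pos_left (by rw [← hpr j]; exact hcon j) hzj
    linarith
end
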